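/- arXiv:1911.10879 — 8 statements merged into one kernel-verified Lean document; each statement's English description precedes it below -/
import Mathlib

section
/- Let (Ω, 𝒜) be a measurable space, let μ and ν be probability measures on Ω, and let (f_k)_{k ∈ K} be a finite family of measurable functions f_k : Ω → ℝ with 0 ≤ f_k(ω) for all k and ω, and ∑_{k ∈ K} f_k(ω) = 1 for every ω ∈ Ω. If for every k ∈ K, either ∫ f_k dμ = 0 or ∫ f_k dν = 0, then there exists a measurable set Δ ⊆ Ω with μ(Δ) = 1 and ν(Δ) = 0; in particular μ and ν are mutually singular. -/
open MeasureTheory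

lemma aux_zero_ae {Ω : Type*} [MeasurableSpace Ω] (μ : Measure Ω)
    [IsProbabilityMeasure μ] (g : Ω → ℝ) (hg : Measurable g)
    (h0 : ∀ ω, 0 ≤ g ω) (h1 : ∀ ω, g ω ≤ 1)
    (hint : (∫ ω, g ω ∂μ) = 0) : ∀ᵐ ω ∂μ, g ω = 0 := by
  have hInt : Integrable g μ := by
    apply Integrable.mono' (integrable_const (1 : ℝ)) hg.aestronglyMeasurable
    filter_upwards with ω
    rw [Real.norm_eq_abs, abs_of_nonneg (h0 ω)]
    exact h1 ω
  have := (integral_eq_zero_iff_of_nonneg (fun ω => h0 ω) hInt).mp hint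
  filter_upwards [this] with ω hω using hω

/-- Single-theory core of Theorem 1: if for every readout outcome `k` at least one of the
two act-outcome credences `∫ f k ∂μ`, `∫ f k ∂ν` vanishes (R-distinguishability), then the
agent's state-credences `μ` and `ν` under the two acts are ontically distinct: there is a
measurable set of full `μ`-measure and zero `ν`-measure, i.e. `μ` and `ν` are mutually
singular. -/
theorem stmt0 {Ω : Type*} [MeasurableSpace Ω] (μ ν : Measure Ω)
    [IsProbabilityMeasure μ] [IsProbabilityMeasure ν]
    {K : Type*} [Fintype K] (f : K → Ω → ℝ)
    (hf_meas : ∀ k, Measurable (f k))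
    (hf_nonneg : ∀ k ω, 0 ≤ f k ω)
    (hf_sum : ∀ ω, ∑ k, f k ω = 1)
    (hdist : ∀ k, (∫ ω, f k ω ∂μ) = 0 ∨ (∫ ω, f k ω ∂ν) = 0) :
    (∃ Δ : Set Ω, MeasurableSet Δ ∧ μ Δ = 1 ∧ ν Δ = 0) ∧ μ.MutuallySingular ν := by
  classical
  have hle1 : ∀ k ω, f k ω ≤ 1 := by
    intro k ω
    calc f k ω ≤ ∑ j, f j ω :=
          Finset.single_le_sum (fun j _ => hf_nonneg j ω) (Finset.mem_univ k)
      _ = 1 := hf_sum ω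
  set S : Finset K := Finset.univ.filter (fun k => (∫ ω, f k ω ∂μ) = 0) with hS
  -- μ-a.e., ∑ k in S, f k ω = 0
  have hμae : ∀ᵐ ω ∂μ, ∀ k ∈ S, f k ω = 0 := by
    rw [Filter.eventually_all_finset]
    intro k hk
    have := aux_zero_ae μ (f k) (hf_meas k) (hf_nonneg k) (hle1 k)
      (by simpa [hS] using (Finset.mem_filter.mp hk).2)
    filter_upwards [this] with ω hω using hω
  have hνae : ∀ᵐ ω ∂ν, ∀ k ∈ Sᶜ, f k ω = 0 := by
    rw [Filter.eventually_all_finset]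
    intro k hk
    have hk' : (∫ ω, f k ω ∂ν) = 0 := by
      rcases hdist k with h | h
      · exact absurd (by simp [hS, h]) (Finset.mem_compl.mp hk)
      · exact h
    have := aux_zero_ae ν (f k) (hf_meas k) (hf_nonneg k) (hle1 k) hk'
    filter_upwards [this] with ω hω using hω
  set Δ : Set Ω := {ω | ∑ k ∈ S, f k ω = 0} with hΔ
  have hmeas : MeasurableSet Δ := by
    have : Measurable fun ω => ∑ k ∈ S, f k ω :=
      Finset.measurable_sum _ (fun k _ => hf_meas k)
    exact this (measurableSet_singleton 0)
  have hμΔ : μ Δ = 1 := by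
    rw [← prob_compl_eq_zero_iff hmeas]
    apply measure_eq_zero_iff_ae_notMem.mpr
    filter_upwards [hμae] with ω hω
    simp only [hΔ, Set.mem_compl_iff, Set.mem_setOf_eq, not_not, Set.not_notMem]
    exact Finset.sum_eq_zero hω
  have hνΔ : ν Δ = 0 := by
    apply measure_eq_zero_iff_ae_notMem.mpr
    filter_upwards [hνae] with ω hω
    simp only [hΔ, Set.mem_setOf_eq]
    intro h
    have hsum : ∑ k ∈ Sᶜ, f k ω = 1 := by
      have := hf_sum ω
      rw [← Finset.sum_add_sum_compl S (fun k => f k ω), h, zero_add] at this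
      exact this
    rw [Finset.sum_eq_zero hω] at hsum
    norm_num at hsum
  refine ⟨⟨Δ, hmeas, hμΔ, hνΔ⟩, ⟨Δᶜ, hmeas.compl, ?_, ?_⟩⟩
  · rw [measure_compl hmeas (by simp), hμΔ]; simp
  · rw [compl_compl]; exact hνΔ
end

section
/- Let J be a finite index set (of theories) and c : J → ℝ≥0 credences with ∑_{j ∈ J} c_j = 1. For each j ∈ J let (Ω_j, 𝒜_j) be a measurable space, let μ_j and ν_j be probability measures on Ω_j, and let (f_{j,k})_{k ∈ K} be a finite family of measurable functions f_{j,k} : Ω_j → ℝ with f_{j,k} ≥ 0 and ∑_{k ∈ K} f_{j,k}(ω) = 1 for every ω ∈ Ω_j. Define p_k = ∑_{j ∈ J} c_j ∫ f_{j,k} dμ_j and q_k = ∑_{j ∈ J} c_j ∫ f_{j,k} dν_j. If for every k ∈ K, either p_k = 0 or q_k = 0, then for every j ∈ J with c_j > 0 there exists a measurable set Δ ⊆ Ω_j with μ_j(Δ) = 1 and ν_j(Δ) = 0; i.e., μ_j and ν_j are mutually singular. -/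
open MeasureTheory

/-- Theorem 1 of the paper: credences `c j` over finitely many theories, each with its own
ontic state space `Ω j`, state-credences `μ j`, `ν j` under two preparation-acts, and
act-independent response functions `f j k`.  If the overall act-outcome credences
`p k`, `q k` are R-distinguishable (for each outcome one of them is zero), then on every
theory with nonzero credence the agent takes the effects of the two acts to be ontically
distinct: `μ j` and `ν j` are mutually singular. -/
theorem stmt1 {J : Type*} [Fintype J] (c : J → NNReal) (hc : ∑ j, c j = 1)
    {Ω : J → Type*} [∀ j, MeasurableSpace (Ω j)]
    (μ ν : ∀ j, Measure (Ω j))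
    [∀ j, IsProbabilityMeasure (μ j)] [∀ j, IsProbabilityMeasure (ν j)]
    {K : Type*} [Fintype K] (f : ∀ j, K → Ω j → ℝ)
    (hf_meas : ∀ j k, Measurable (f j k))
    (hf_nonneg : ∀ j k ω, 0 ≤ f j k ω)
    (hf_sum : ∀ j ω, ∑ k, f j k ω = 1)
    (hdist : ∀ k,
      (∑ j, (c j : ℝ) * ∫ ω, f j k ω ∂(μ j)) = 0 ∨
      (∑ j, (c j : ℝ) * ∫ ω, f j k ω ∂(ν j)) = 0) :
    ∀ j, 0 < c j →
      (∃ Δ : Set (Ω j), MeasurableSet Δ ∧ μ j Δ = 1 ∧ ν j Δ = 0) ∧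
        (μ j).MutuallySingular (ν j) := by
  classical
  intro j hj
  -- each f j k is bounded by 1
  have hf_le : ∀ k ω, f j k ω ≤ 1 := by
    intro k ω
    calc f j k ω ≤ ∑ k', f j k' ω :=
      Finset.single_le_sum (fun k' _ => hf_nonneg j k' ω) (Finset.mem_univ k)
    _ = 1 := hf_sum j ω
  -- integrability
  have hint : ∀ (π : Measure (Ω j)) [IsProbabilityMeasure π] (k : K),
      Integrable (f j k) π := by
    intro π _ k
    refine (integrable_const (1 : ℝ)).mono' (hf_meas j k).aestronglyMeasurable ?_
    filter_upwards with ω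
    rw [Real.norm_eq_abs, abs_of_nonneg (hf_nonneg j k ω)]
    exact hf_le k ω
  -- integrals are nonneg
  have hμint_nonneg : ∀ (π : Measure (Ω j)) (k : K), 0 ≤ ∫ ω, f j k ω ∂π := by
    intro π k; exact integral_nonneg (fun ω => hf_nonneg j k ω)
  -- from hdist, for each k one of the j-integrals vanishes
  have hkey : ∀ k, (∫ ω, f j k ω ∂(μ j)) = 0 ∨ (∫ ω, f j k ω ∂(ν j)) = 0 := by
    intro k
    have hterm : ∀ (π : ∀ j', Measure (Ω j')) [∀ j', IsProbabilityMeasure (π j')],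
        (∑ j', (c j' : ℝ) * ∫ ω, f j' k ω ∂(π j')) = 0 →
        (∫ ω, f j k ω ∂(π j)) = 0 := by
      intro π _ hsum
      have hnn : ∀ j' ∈ Finset.univ, 0 ≤ (c j' : ℝ) * ∫ ω, f j' k ω ∂(π j') :=
        fun j' _ => mul_nonneg (c j').coe_nonneg
          (integral_nonneg (fun ω => hf_nonneg j' k ω))
      have := (Finset.sum_eq_zero_iff_of_nonneg hnn).mp hsum j (Finset.mem_univ j)
      have hcj : (c j : ℝ) ≠ 0 := by positivity
      exact (mul_eq_zero.mp this).resolve_left hcj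
    rcases hdist k with h | h
    · exact Or.inl (hterm μ h)
    · exact Or.inr (hterm ν h)
  -- the set of outcomes whose μ-integral vanishes
  set S : Finset K := Finset.univ.filter (fun k => (∫ ω, f j k ω ∂(μ j)) = 0) with hS
  set g : Ω j → ℝ := fun ω => ∑ k ∈ S, f j k ω with hg
  have hg_meas : Measurable g := by
    apply Finset.measurable_sum
    intro k _; exact hf_meas j k
  have hg_nonneg : ∀ ω, 0 ≤ g ω := fun ω =>
    Finset.sum_nonneg (fun k _ => hf_nonneg j k ω)
  have hg_le : ∀ ω, g ω ≤ 1 := by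
    intro ω
    have h1 : g ω ≤ ∑ k, f j k ω :=
      Finset.sum_le_sum_of_subset_of_nonneg (Finset.subset_univ S)
        (fun k _ _ => hf_nonneg j k ω)
    simpa [hf_sum j ω] using h1
  have hg_int : ∀ (π : Measure (Ω j)) [IsProbabilityMeasure π], Integrable g π :=
    fun π _ => integrable_finset_sum S (fun k _ => hint π k)
  -- ∫ g dμ = 0
  have hgμ : ∫ ω, g ω ∂(μ j) = 0 := by
    rw [hg, integral_finset_sum S (fun k _ => hint (μ j) k)]
    apply Finset.sum_eq_zero
    intro k hk
    exact (Finset.mem_filter.mp hk).2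
  -- ∫ g dν = 1
  have hgν : ∫ ω, g ω ∂(ν j) = 1 := by
    rw [hg, integral_finset_sum S (fun k _ => hint (ν j) k)]
    have htot : ∑ k, ∫ ω, f j k ω ∂(ν j) = 1 := by
      rw [← integral_finset_sum Finset.univ (fun k _ => hint (ν j) k)]
      simp only [hf_sum j]
      simp
    rw [← htot]
    apply Finset.sum_subset (Finset.subset_univ S)
    intro k _ hk
    rcases hkey k with h | h
    · exact absurd (Finset.mem_filter.mpr ⟨Finset.mem_univ k, h⟩) hk
    · exact h
  -- g = 0 μ-a.e.
  have hae_μ : g =ᵐ[μ j] 0 :=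
    (integral_eq_zero_iff_of_nonneg hg_nonneg (hg_int (μ j))).mp hgμ
  -- g = 1 ν-a.e. (via 1 - g)
  have hae_ν : (fun ω => (1 : ℝ) - g ω) =ᵐ[ν j] 0 := by
    have hint' : Integrable (fun ω => (1 : ℝ) - g ω) (ν j) :=
      (integrable_const (1 : ℝ)).sub (hg_int (ν j))
    refine (integral_eq_zero_iff_of_nonneg (fun ω => by simpa using hg_le ω) hint').mp ?_
    rw [integral_sub (integrable_const 1) (hg_int (ν j)), hgν]
    simp
  set Δ : Set (Ω j) := {ω | g ω = 0} with hΔ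
  have hΔ_meas : MeasurableSet Δ := hg_meas (measurableSet_singleton 0)
  have hμΔc : μ j Δᶜ = 0 := by
    have := hae_μ
    rw [Filter.EventuallyEq, ae_iff] at this
    simpa [hΔ, Set.compl_setOf] using this
  have hμΔ : μ j Δ = 1 := (prob_compl_eq_zero_iff hΔ_meas).mp hμΔc
  have hνΔ : ν j Δ = 0 := by
    have h0 : ν j {ω | ¬ ((1 : ℝ) - g ω = 0)} = 0 := by
      have := hae_ν
      rw [Filter.EventuallyEq, ae_iff] at this
      simpa using this
    refine measure_mono_null ?_ h0
    intro ω hω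
    simp only [Set.mem_setOf_eq] at *
    rw [hω]; norm_num
  refine ⟨⟨Δ, hΔ_meas, hμΔ, hνΔ⟩, ⟨Δᶜ, hΔ_meas.compl, ?_, ?_⟩⟩
  · exact hμΔc
  · rwa [compl_compl]
end

section
/- Let n be a finite type, let u, v : n → ℂ be unit vectors (star u ⬝ᵥ u = 1 and star v ⬝ᵥ v = 1), and let (E_k)_{k ∈ K} be a finite family of positive semidefinite matrices E_k : Matrix n n ℂ with ∑_{k ∈ K} E_k = 1 (the identity matrix). If for every k ∈ K, either star u ⬝ᵥ (E_k *ᵥ u) = 0 or star v ⬝ᵥ (E_k *ᵥ v) = 0, then star u ⬝ᵥ v = 0, i.e., u and v are orthogonal. -/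
open Matrix
open scoped ComplexOrder

/-- If two pure states (unit vectors `u`, `v`) are distinguishable by a POVM
`(E k)` (for each outcome, at least one of the two Born probabilities vanishes),
then the states are orthogonal. -/
theorem stmt2 {n : Type*} [Fintype n] [DecidableEq n]
    (u v : n → ℂ) (hu : star u ⬝ᵥ u = 1) (hv : star v ⬝ᵥ v = 1)
    {K : Type*} [Fintype K] (E : K → Matrix n n ℂ)
    (hE_pos : ∀ k, (E k).PosSemidef) (hE_sum : ∑ k, E k = 1)
    (hdist : ∀ k, star u ⬝ᵥ (E k *ᵥ u) = 0 ∨ star v ⬝ᵥ (E k *ᵥ v) = 0) :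
    star u ⬝ᵥ v = 0 := by
  have key : ∀ k, star u ⬝ᵥ (E k *ᵥ v) = 0 := by
    intro k
    rcases hdist k with h | h
    · have h0 : E k *ᵥ u = 0 := ((hE_pos k).dotProduct_mulVec_zero_iff u).mp h
      calc star u ⬝ᵥ (E k *ᵥ v) = star (E k *ᵥ u) ⬝ᵥ v := by
            rw [star_mulVec, dotProduct_mulVec, (hE_pos k).isHermitian.eq]
      _ = 0 := by rw [h0]; simp
    · have h0 : E k *ᵥ v = 0 := ((hE_pos k).dotProduct_mulVec_zero_iff v).mp h
      rw [h0, dotProduct_zero]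
  have : star u ⬝ᵥ ((∑ k, E k) *ᵥ v) = 0 := by
    have hsum : (∑ k, E k) *ᵥ v = ∑ k, E k *ᵥ v := by
      ext i
      simp only [mulVec, dotProduct, Finset.sum_apply, Matrix.sum_apply, Finset.sum_mul]
      rw [Finset.sum_comm]
    rw [hsum]
    simp only [dotProduct, Finset.sum_apply, Finset.mul_sum]
    rw [Finset.sum_comm]
    exact Finset.sum_eq_zero fun k _ => key k
  simpa [hE_sum] using this
end

section
/- Let (Ω, 𝒜) be a measurable space, let μ and ν be probability measures on Ω, and let f_0, f_1, f_2, f_3 : Ω × Ω → ℝ be measurable functions with f_i ≥ 0 and f_0 + f_1 + f_2 + f_3 = 1 pointwise. Suppose ∫ f_0 d(μ × μ) = 0, ∫ f_1 d(μ × ν) = 0, ∫ f_2 d(ν × μ) = 0, and ∫ f_3 d(ν × ν) = 0, where μ × ν denotes the product measure on Ω × Ω. Then μ and ν are mutually singular. -/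
open MeasureTheory

lemma aux_ae_zero {Ω : Type*} [MeasurableSpace Ω] (m : Measure Ω)
    [IsProbabilityMeasure m] (f : Ω → ℝ) (hf : Measurable f)
    (h0 : ∀ p, 0 ≤ f p) (h1 : ∀ p, f p ≤ 1) (hE : (∫ p, f p ∂m) = 0) :
    ∀ᵐ p ∂m, f p = 0 := by
  have hint : Integrable f m := by
    refine (integrable_const (1 : ℝ)).mono' hf.aestronglyMeasurable ?_
    exact Filter.Eventually.of_forall fun p => by
      rw [Real.norm_of_nonneg (h0 p)]; exact h1 p
  have := (integral_eq_zero_iff_of_nonneg (fun p => h0 p) hint).mp hE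
  exact this

/-- Measure-theoretic core of the PBR argument under the Preparation Independence
Postulate: if the four product-measure preparations are antidistinguishable by a
four-outcome measurement with response functions `f0, f1, f2, f3`, then `μ` and `ν`
are mutually singular. -/
theorem stmt3 {Ω : Type*} [MeasurableSpace Ω] (μ ν : Measure Ω)
    [IsProbabilityMeasure μ] [IsProbabilityMeasure ν]
    (f0 f1 f2 f3 : Ω × Ω → ℝ)
    (hf0 : Measurable f0) (hf1 : Measurable f1) (hf2 : Measurable f2) (hf3 : Measurable f3)
    (h0 : ∀ p, 0 ≤ f0 p) (h1 : ∀ p, 0 ≤ f1 p) (h2 : ∀ p, 0 ≤ f2 p) (h3 : ∀ p, 0 ≤ f3 p)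
    (hsum : ∀ p, f0 p + f1 p + f2 p + f3 p = 1)
    (hE0 : (∫ p, f0 p ∂(μ.prod μ)) = 0)
    (hE1 : (∫ p, f1 p ∂(μ.prod ν)) = 0)
    (hE2 : (∫ p, f2 p ∂(ν.prod μ)) = 0)
    (hE3 : (∫ p, f3 p ∂(ν.prod ν)) = 0) :
    μ.MutuallySingular ν := by
  have b0 : ∀ p, f0 p ≤ 1 := by
    intro p
    have := hsum p; have := h1 p; have := h2 p; have := h3 p
    linarith
  have b1 : ∀ p, f1 p ≤ 1 := by
    intro p
    have := hsum p; have := h0 p; have := h2 p; have := h3 p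
    linarith
  have b2 : ∀ p, f2 p ≤ 1 := by
    intro p
    have := hsum p; have := h0 p; have := h1 p; have := h3 p
    linarith
  have b3 : ∀ p, f3 p ≤ 1 := by
    intro p
    have := hsum p; have := h0 p; have := h1 p; have := h2 p
    linarith
  have a0 : ∀ᵐ x ∂μ, ∀ᵐ y ∂μ, f0 (x, y) = 0 :=
    Measure.ae_ae_of_ae_prod (aux_ae_zero (μ.prod μ) f0 hf0 h0 b0 hE0)
  have a1 : ∀ᵐ x ∂μ, ∀ᵐ y ∂ν, f1 (x, y) = 0 :=
    Measure.ae_ae_of_ae_prod (aux_ae_zero (μ.prod ν) f1 hf1 h1 b1 hE1)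
  have a2 : ∀ᵐ x ∂ν, ∀ᵐ y ∂μ, f2 (x, y) = 0 :=
    Measure.ae_ae_of_ae_prod (aux_ae_zero (ν.prod μ) f2 hf2 h2 b2 hE2)
  have a3 : ∀ᵐ x ∂ν, ∀ᵐ y ∂ν, f3 (x, y) = 0 :=
    Measure.ae_ae_of_ae_prod (aux_ae_zero (ν.prod ν) f3 hf3 h3 b3 hE3)
  set P : Ω → Prop := fun x => (∀ᵐ y ∂μ, f0 (x, y) = 0) ∧ (∀ᵐ y ∂ν, f1 (x, y) = 0) with hP_def
  set Q : Ω → Prop := fun x => (∀ᵐ y ∂μ, f2 (x, y) = 0) ∧ (∀ᵐ y ∂ν, f3 (x, y) = 0) with hQ_def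
  have hP : ∀ᵐ x ∂μ, P x := a0.and a1
  have hQ : ∀ᵐ x ∂ν, Q x := a2.and a3
  by_cases hex : ∃ x, P x ∧ Q x
  · obtain ⟨x, ⟨hx0, hx1⟩, hx2, hx3⟩ := hex
    refine Measure.MutuallySingular.mk (s := {y | f1 (x, y) + f3 (x, y) ≠ 1})
      (t := {y | f1 (x, y) + f3 (x, y) = 1}) ?_ ?_ ?_
    · have : ∀ᵐ y ∂μ, f1 (x, y) + f3 (x, y) = 1 := by
        filter_upwards [hx0, hx2] with y hy0 hy2
        have := hsum (x, y); linarith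
      exact ae_iff.mp this
    · have : ∀ᵐ y ∂ν, ¬ (f1 (x, y) + f3 (x, y) = 1) := by
        filter_upwards [hx1, hx3] with y hy1 hy3
        intro h; rw [hy1, hy3] at h; norm_num at h
      simpa using ae_iff.mp this
    · intro y _
      by_cases h : f1 (x, y) + f3 (x, y) = 1
      · exact Or.inr h
      · exact Or.inl h
  · push_neg at hex
    refine Measure.MutuallySingular.mk (s := {x | ¬ P x}) (t := {x | ¬ Q x}) ?_ ?_ ?_
    · exact ae_iff.mp hP
    · exact ae_iff.mp hQ
    · intro x _
      by_cases h : P x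
      · exact Or.inr (hex x h)
      · exact Or.inl h
end

section
/- Let u, v : Fin 2 → ℂ be unit vectors with ‖star u ⬝ᵥ v‖ ≤ 1/√2. For x, y ∈ {u, v} define w(x, y) : Fin 2 × Fin 2 → ℂ by w(x, y)(i, j) = x(i) · y(j). Then there exist positive semidefinite matrices E_0, E_1, E_2, E_3 : Matrix (Fin 2 × Fin 2) (Fin 2 × Fin 2) ℂ with E_0 + E_1 + E_2 + E_3 = 1 (the identity matrix) such that star w(u,u) ⬝ᵥ (E_0 *ᵥ w(u,u)) = 0, star w(u,v) ⬝ᵥ (E_1 *ᵥ w(u,v)) = 0, star w(v,u) ⬝ᵥ (E_2 *ᵥ w(v,u)) = 0, and star w(v,v) ⬝ᵥ (E_3 *ᵥ w(v,v)) = 0. -/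
open Matrix
open scoped ComplexOrder

/-- The product state `x ⊗ y` of two qubits, as a vector on `Fin 2 × Fin 2`. -/
def prodState (x y : Fin 2 → ℂ) : Fin 2 × Fin 2 → ℂ := fun p => x p.1 * y p.2


/-- outer product matrix with nonneg real weight is PSD -/
lemma outer_psd (w : ℝ) (hw : 0 ≤ w) (x : Fin 2 × Fin 2 → ℂ) :
    (Matrix.of fun p q => (w:ℂ) * x p * (starRingEnd ℂ) (x q)).PosSemidef := by
  rw [Matrix.posSemidef_iff_dotProduct_mulVec]
  constructor
  · ext p q
    simp [Matrix.conjTranspose_apply, Complex.conj_ofReal, mul_comm, mul_assoc, mul_left_comm]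
  · intro y
    have : star y ⬝ᵥ ((Matrix.of fun p q => (w:ℂ) * x p * (starRingEnd ℂ) (x q)) *ᵥ y)
        = (w:ℂ) * ((starRingEnd ℂ) (star x ⬝ᵥ y) * (star x ⬝ᵥ y)) := by
      simp only [mulVec, dotProduct, Matrix.of_apply, Pi.star_apply, map_sum, _root_.map_mul, map_add, Complex.conj_conj,
        Complex.star_def, Fintype.sum_prod_type, Fin.sum_univ_two]
      ring
    rw [this]
    exact mul_nonneg (by exact_mod_cast hw) (star_mul_self_nonneg _)

/-- Born probability vanishes when the outer vector is orthogonal to the state -/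
lemma outer_born_zero (w : ℝ) (x ψ : Fin 2 × Fin 2 → ℂ) (h : star x ⬝ᵥ ψ = 0) :
    star ψ ⬝ᵥ ((Matrix.of fun p q => (w:ℂ) * x p * (starRingEnd ℂ) (x q)) *ᵥ ψ) = 0 := by
  have : ((Matrix.of fun p q => (w:ℂ) * x p * (starRingEnd ℂ) (x q)) *ᵥ ψ)
      = fun p => ((w:ℂ) * (star x ⬝ᵥ ψ)) * x p := by
    funext p
    simp only [mulVec, dotProduct, Matrix.of_apply, Pi.star_apply, Complex.star_def,
      Fintype.sum_prod_type, Fin.sum_univ_two]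
    ring
  rw [this, h]
  simp [dotProduct]


set_option maxHeartbeats 2000000 in
theorem core (a b : Fin 2 → ℂ) (t s D r2 : ℝ)
    (hcompl : ∀ i j, a i * (starRingEnd ℂ) (a j) + b i * (starRingEnd ℂ) (b j)
      = if i = j then 1 else 0)
    (naa : star a ⬝ᵥ a = 1) (nbb : star b ⬝ᵥ b = 1)
    (oab : star a ⬝ᵥ b = 0) (oba : star b ⬝ᵥ a = 0)
    (hs : s^2 = 1 - t^2) (hD : D^2 = 1 - 2*t^2) (hr : r2^2 = 2)
    (hs0 : 0 < s) (hD0 : 0 ≤ D) (hr0 : 0 ≤ r2) :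
    ∃ E0 E1 E2 E3 : Matrix (Fin 2 × Fin 2) (Fin 2 × Fin 2) ℂ,
      E0.PosSemidef ∧ E1.PosSemidef ∧ E2.PosSemidef ∧ E3.PosSemidef ∧
      E0 + E1 + E2 + E3 = 1 ∧
      star (prodState a a) ⬝ᵥ (E0 *ᵥ prodState a a) = 0 ∧
      star (prodState a ((t:ℂ) • a + (s:ℂ) • b)) ⬝ᵥ (E1 *ᵥ prodState a ((t:ℂ) • a + (s:ℂ) • b)) = 0 ∧
      star (prodState ((t:ℂ) • a + (s:ℂ) • b) a) ⬝ᵥ (E2 *ᵥ prodState ((t:ℂ) • a + (s:ℂ) • b) a) = 0 ∧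
      star (prodState ((t:ℂ) • a + (s:ℂ) • b) ((t:ℂ) • a + (s:ℂ) • b)) ⬝ᵥ
        (E3 *ᵥ prodState ((t:ℂ) • a + (s:ℂ) • b) ((t:ℂ) • a + (s:ℂ) • b)) = 0 := by
  have ht2 : t^2 ≤ 1/2 := by nlinarith [sq_nonneg D]
  set Q : ℝ := 6*s^2 - 2*t^2 + 4*r2*D*s with hQdef
  have hQ0 : 0 < Q := by
    have h1 : 0 ≤ 4*r2*D*s := by positivity
    simp only [hQdef]; nlinarith
  set ν : ℝ := 2*s^2*Q with hνdef
  have hν0 : 0 < ν := by positivity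
  have hνC : ((ν:ℝ):ℂ) ≠ 0 := by exact_mod_cast hν0.ne'
  set φ0 : Fin 2 × Fin 2 → ℂ :=
    ((t:ℝ):ℂ) • prodState a b + ((t:ℝ):ℂ) • prodState b a + ((-(r2*D) : ℝ):ℂ) • prodState b b with hφ0
  set φ1 : Fin 2 × Fin 2 → ℂ :=
    ((t*s : ℝ):ℂ) • prodState a a + ((-(t^2) : ℝ):ℂ) • prodState a b +
      ((2*s^2-t^2+r2*D*s : ℝ):ℂ) • prodState b a + ((t*s+r2*t*D : ℝ):ℂ) • prodState b b with hφ1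
  set φ2 : Fin 2 × Fin 2 → ℂ :=
    ((t*s : ℝ):ℂ) • prodState a a + ((2*s^2-t^2+r2*D*s : ℝ):ℂ) • prodState a b +
      ((-(t^2) : ℝ):ℂ) • prodState b a + ((t*s+r2*t*D : ℝ):ℂ) • prodState b b with hφ2
  set φ3 : Fin 2 × Fin 2 → ℂ :=
    ((2*s^2+2*r2*s*D : ℝ):ℂ) • prodState a a + ((-(r2*t*D) : ℝ):ℂ) • prodState a b +
      ((-(r2*t*D) : ℝ):ℂ) • prodState b a + ((-(2*t^2) : ℝ):ℂ) • prodState b b with hφ3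
  have keyC : ((s:ℝ):ℂ)^2 - ((t:ℝ):ℂ)^2 - ((D:ℝ):ℂ)^2*((r2:ℝ):ℂ)^2/2 = 0 := by
    have : s^2 - t^2 - D^2*r2^2/2 = 0 := by rw [hD, hr]; linarith
    exact_mod_cast this
  -- completeness of the basis
  have hcomplM : ∀ p q : Fin 2 × Fin 2,
      (a p.1 * a p.2) * ((starRingEnd ℂ) (a q.1) * (starRingEnd ℂ) (a q.2)) +
      (a p.1 * b p.2) * ((starRingEnd ℂ) (a q.1) * (starRingEnd ℂ) (b q.2)) +
      (b p.1 * a p.2) * ((starRingEnd ℂ) (b q.1) * (starRingEnd ℂ) (a q.2)) +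
      (b p.1 * b p.2) * ((starRingEnd ℂ) (b q.1) * (starRingEnd ℂ) (b q.2)) =
      if p = q then 1 else 0 := by
    intro p q
    have : (a p.1 * a p.2) * ((starRingEnd ℂ) (a q.1) * (starRingEnd ℂ) (a q.2)) +
      (a p.1 * b p.2) * ((starRingEnd ℂ) (a q.1) * (starRingEnd ℂ) (b q.2)) +
      (b p.1 * a p.2) * ((starRingEnd ℂ) (b q.1) * (starRingEnd ℂ) (a q.2)) +
      (b p.1 * b p.2) * ((starRingEnd ℂ) (b q.1) * (starRingEnd ℂ) (b q.2)) =
      (a p.1 * (starRingEnd ℂ) (a q.1) + b p.1 * (starRingEnd ℂ) (b q.1)) *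
      (a p.2 * (starRingEnd ℂ) (a q.2) + b p.2 * (starRingEnd ℂ) (b q.2)) := by ring
    rw [this, hcompl p.1 q.1, hcompl p.2 q.2]
    rcases p with ⟨p1, p2⟩; rcases q with ⟨q1, q2⟩
    by_cases h1 : p1 = q1 <;> by_cases h2 : p2 = q2 <;>
      simp [h1, h2, Prod.ext_iff]
  -- the key Gram identity
  have hKey : ∀ p q : Fin 2 × Fin 2,
      ((Q:ℝ):ℂ) * φ0 p * (starRingEnd ℂ) (φ0 q) + 2 * φ1 p * (starRingEnd ℂ) (φ1 q) +
      2 * φ2 p * (starRingEnd ℂ) (φ2 q) + φ3 p * (starRingEnd ℂ) (φ3 q) =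
      ((ν:ℝ):ℂ) * (if p = q then 1 else 0) := by
    intro p q
    rw [← hcomplM p q]
    simp only [hφ0, hφ1, hφ2, hφ3, hνdef, hQdef, prodState, Pi.add_apply, Pi.smul_apply,
      smul_eq_mul, map_add, _root_.map_mul, Complex.conj_ofReal]
    push_cast
    linear_combination ((-8*(s:ℂ)^2) * (a p.1 * a p.2) * ((starRingEnd ℂ) (a q.1) * (starRingEnd ℂ) (a q.2)) + (4*(t:ℂ)*(s:ℂ)) * (a p.1 * a p.2) * ((starRingEnd ℂ) (a q.1) * (starRingEnd ℂ) (b q.2)) + (4*(t:ℂ)*(s:ℂ)) * (a p.1 * a p.2) * ((starRingEnd ℂ) (b q.1) * (starRingEnd ℂ) (a q.2)) + (4*(t:ℂ)*(s:ℂ)) * (a p.1 * b p.2) * ((starRingEnd ℂ) (a q.1) * (starRingEnd ℂ) (a q.2)) + (-4*(s:ℂ)^2-2*(t:ℂ)^2) * (a p.1 * b p.2) * ((starRingEnd ℂ) (a q.1) * (starRingEnd ℂ) (b q.2)) + (-2*(t:ℂ)^2) * (a p.1 * b p.2) * ((starRingEnd ℂ) (b q.1) * (starRingEnd ℂ) (a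 q.2)) + (4*(t:ℂ)*(s:ℂ)) * (a p.1 * b p.2) * ((starRingEnd ℂ) (b q.1) * (starRingEnd ℂ) (b q.2)) + (4*(t:ℂ)*(s:ℂ)) * (b p.1 * a p.2) * ((starRingEnd ℂ) (a q.1) * (starRingEnd ℂ) (a q.2)) + (-2*(t:ℂ)^2) * (b p.1 * a p.2) * ((starRingEnd ℂ) (a q.1) * (starRingEnd ℂ) (b q.2)) + (-4*(s:ℂ)^2-2*(t:ℂ)^2) * (b p.1 * a p.2) * ((starRingEnd ℂ) (b q.1) * (starRingEnd ℂ) (a q.2)) + (4*(t:ℂ)*(s:ℂ)) * (b p.1 * a p.2) * ((starRingEnd ℂ) (b q.1) * (starRingEnd ℂ) (b q.2)) + (4*(t:ℂ)*(s:ℂ)) * (b p.1 * b p.2) * ((starRingEnd ℂ) (a q.1) * (starRingEnd ℂ) (b q.2)) + (4*(t:ℂ)*(s:ℂ)) * (b p.1 * b p.2) * ((starRingEnd ℂ) (b q.1) * (starRingEnd ℂ) (a q.2)) + (-8*(s:ℂ)*(D:ℂ)*(r2:ℂ)-12*(s:ℂ)^2-4*(t:ℂ)^2) * (b p.1 * b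 p.2) * ((starRingEnd ℂ) (b q.1) * (starRingEnd ℂ) (b q.2))) * keyC
  -- orthogonality of measurement vectors to the corresponding states
  have dots : ∀ x y x' y' : Fin 2 → ℂ,
      star (prodState x y) ⬝ᵥ prodState x' y' = (star x ⬝ᵥ x') * (star y ⬝ᵥ y') := by
    intro x y x' y'
    simp only [dotProduct, prodState, Pi.star_apply]
    rw [Fintype.sum_prod_type]
    simp only [Fin.sum_univ_two, Complex.star_def, _root_.map_mul]
    ring
  have hdv1 : star a ⬝ᵥ ((t:ℂ) • a + (s:ℂ) • b) = (t:ℂ) := by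
    simp [dotProduct_add, dotProduct_smul, naa, oab, smul_eq_mul]
  have hdv2 : star b ⬝ᵥ ((t:ℂ) • a + (s:ℂ) • b) = (s:ℂ) := by
    simp [dotProduct_add, dotProduct_smul, nbb, oba, smul_eq_mul]
  have starsum : ∀ (c1 c2 c3 c4 : ℝ) (x1 x2 x3 x4 : Fin 2 × Fin 2 → ℂ)
      (ψ : Fin 2 × Fin 2 → ℂ),
      star (((c1:ℝ):ℂ) • x1 + ((c2:ℝ):ℂ) • x2 + ((c3:ℝ):ℂ) • x3 + ((c4:ℝ):ℂ) • x4) ⬝ᵥ ψ =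
      (c1:ℂ) * (star x1 ⬝ᵥ ψ) + (c2:ℂ) * (star x2 ⬝ᵥ ψ) + (c3:ℂ) * (star x3 ⬝ᵥ ψ) +
      (c4:ℂ) * (star x4 ⬝ᵥ ψ) := by
    intro c1 c2 c3 c4 x1 x2 x3 x4 ψ
    simp [star_add, star_smul, add_dotProduct, smul_dotProduct, smul_eq_mul,
      Complex.star_def, Complex.conj_ofReal]
  have starsum3 : ∀ (c1 c2 c3 : ℝ) (x1 x2 x3 : Fin 2 × Fin 2 → ℂ)
      (ψ : Fin 2 × Fin 2 → ℂ),
      star (((c1:ℝ):ℂ) • x1 + ((c2:ℝ):ℂ) • x2 + ((c3:ℝ):ℂ) • x3) ⬝ᵥ ψ =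
      (c1:ℂ) * (star x1 ⬝ᵥ ψ) + (c2:ℂ) * (star x2 ⬝ᵥ ψ) + (c3:ℂ) * (star x3 ⬝ᵥ ψ) := by
    intro c1 c2 c3 x1 x2 x3 ψ
    simp [star_add, star_smul, add_dotProduct, smul_dotProduct, smul_eq_mul,
      Complex.star_def, Complex.conj_ofReal]
  have orth0 : star φ0 ⬝ᵥ prodState a a = 0 := by
    rw [hφ0, starsum3]
    simp only [dots, naa, nbb, oab, oba]
    push_cast; ring
  have orth1 : star φ1 ⬝ᵥ prodState a ((t:ℂ) • a + (s:ℂ) • b) = 0 := by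
    rw [hφ1, starsum]
    simp only [dots, naa, nbb, oab, oba, hdv1, hdv2]
    push_cast; ring
  have orth2 : star φ2 ⬝ᵥ prodState ((t:ℂ) • a + (s:ℂ) • b) a = 0 := by
    rw [hφ2, starsum]
    simp only [dots, naa, nbb, oab, oba, hdv1, hdv2]
    push_cast; ring
  have orth3 : star φ3 ⬝ᵥ prodState ((t:ℂ) • a + (s:ℂ) • b) ((t:ℂ) • a + (s:ℂ) • b) = 0 := by
    rw [hφ3, starsum]
    simp only [dots, naa, nbb, oab, oba, hdv1, hdv2]
    push_cast; ring
  -- the POVM elements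
  refine ⟨Matrix.of fun p q => ((Q/ν : ℝ):ℂ) * φ0 p * (starRingEnd ℂ) (φ0 q),
    Matrix.of fun p q => ((2/ν : ℝ):ℂ) * φ1 p * (starRingEnd ℂ) (φ1 q),
    Matrix.of fun p q => ((2/ν : ℝ):ℂ) * φ2 p * (starRingEnd ℂ) (φ2 q),
    Matrix.of fun p q => ((1/ν : ℝ):ℂ) * φ3 p * (starRingEnd ℂ) (φ3 q),
    outer_psd _ (by positivity) _, outer_psd _ (by positivity) _,
    outer_psd _ (by positivity) _, outer_psd _ (by positivity) _,
    ?_, outer_born_zero _ _ _ orth0, outer_born_zero _ _ _ orth1,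
    outer_born_zero _ _ _ orth2, outer_born_zero _ _ _ orth3⟩
  ext p q
  simp only [Matrix.add_apply, Matrix.of_apply, Matrix.one_apply]
  have hk := hKey p q
  push_cast at hk ⊢
  by_cases h : p = q
  · simp only [h, if_true, mul_one] at hk ⊢
    field_simp
    linear_combination hk
  · simp only [h, if_false, mul_zero] at hk ⊢
    field_simp
    linear_combination hk

set_option maxHeartbeats 2000000 in
/-- Antidistinguishability of the four product states: if two pure qubit states `u`, `v`
have overlap `|⟨u|v⟩| ≤ 1/√2`, then there is a four-outcome POVM on the two-qubit space
such that each outcome has Born probability zero on the corresponding product state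
`u⊗u`, `u⊗v`, `v⊗u`, `v⊗v`. -/
theorem stmt5 (u v : Fin 2 → ℂ) (hu : star u ⬝ᵥ u = 1) (hv : star v ⬝ᵥ v = 1)
    (hover : ‖star u ⬝ᵥ v‖ ≤ 1 / Real.sqrt 2) :
    ∃ E0 E1 E2 E3 : Matrix (Fin 2 × Fin 2) (Fin 2 × Fin 2) ℂ,
      E0.PosSemidef ∧ E1.PosSemidef ∧ E2.PosSemidef ∧ E3.PosSemidef ∧
      E0 + E1 + E2 + E3 = 1 ∧
      star (prodState u u) ⬝ᵥ (E0 *ᵥ prodState u u) = 0 ∧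
      star (prodState u v) ⬝ᵥ (E1 *ᵥ prodState u v) = 0 ∧
      star (prodState v u) ⬝ᵥ (E2 *ᵥ prodState v u) = 0 ∧
      star (prodState v v) ⬝ᵥ (E3 *ᵥ prodState v v) = 0 := by
  set c : ℂ := star u ⬝ᵥ v with hcdef
  set t : ℝ := ‖c‖ with htdef
  have ht0 : 0 ≤ t := norm_nonneg c
  have ht2 : t^2 ≤ 1/2 := by
    have h1 : t ≤ 1 / Real.sqrt 2 := by rw [htdef]; exact hover
    have h2 : (1 / Real.sqrt 2)^2 = 1/2 := by
      rw [div_pow, one_pow, Real.sq_sqrt (by norm_num : (0:ℝ) ≤ 2)]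
    nlinarith
  set s : ℝ := Real.sqrt (1 - t^2) with hsdef
  have hs : s^2 = 1 - t^2 := Real.sq_sqrt (by nlinarith)
  have hs0 : 0 < s := Real.sqrt_pos.mpr (by nlinarith)
  set D : ℝ := Real.sqrt (1 - 2*t^2) with hDdef
  have hD : D^2 = 1 - 2*t^2 := Real.sq_sqrt (by nlinarith)
  have hD0 : 0 ≤ D := Real.sqrt_nonneg _
  set r2 : ℝ := Real.sqrt 2 with hr2def
  have hr : r2^2 = 2 := Real.sq_sqrt (by norm_num)
  have hr0 : 0 ≤ r2 := Real.sqrt_nonneg _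
  have hsC : ((s:ℝ):ℂ) ≠ 0 := by exact_mod_cast hs0.ne'
  -- the phase
  set p : ℂ := if c = 0 then 1 else c / (t:ℝ) with hpdef
  have hpc : c = (t:ℝ) * p := by
    by_cases h : c = 0
    · simp [hpdef, h, htdef, map_zero]
    · have htne : ((t:ℝ):ℂ) ≠ 0 := by
        simp only [htdef]; exact_mod_cast (norm_ne_zero_iff.mpr h)
      rw [hpdef, if_neg h, mul_div_cancel₀ _ htne]
  have hpp : (starRingEnd ℂ) p * p = 1 := by
    by_cases h : c = 0
    · simp [hpdef, h]
    · have htne : ((t:ℝ):ℂ) ≠ 0 := by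
        simp only [htdef]; exact_mod_cast (norm_ne_zero_iff.mpr h)
      rw [hpdef, if_neg h]
      rw [map_div₀, Complex.conj_ofReal, div_mul_div_comm, mul_comm ((starRingEnd ℂ) c) c,
        Complex.mul_conj, Complex.normSq_eq_norm_sq]
      rw [div_eq_one_iff_eq (by exact mul_ne_zero htne htne)]
      push_cast [htdef]; ring
  have hcc : (starRingEnd ℂ) c * c = ((t:ℝ):ℂ)^2 := by
    rw [mul_comm, Complex.mul_conj, Complex.normSq_eq_norm_sq]
    push_cast [htdef]; ring
  -- expanded hypotheses
  have hu' : (starRingEnd ℂ) (u 0) * u 0 + (starRingEnd ℂ) (u 1) * u 1 = 1 := by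
    simpa [dotProduct, Fin.sum_univ_two, Complex.star_def] using hu
  have hv' : (starRingEnd ℂ) (v 0) * v 0 + (starRingEnd ℂ) (v 1) * v 1 = 1 := by
    simpa [dotProduct, Fin.sum_univ_two, Complex.star_def] using hv
  have hc : c = (starRingEnd ℂ) (u 0) * v 0 + (starRingEnd ℂ) (u 1) * v 1 := by
    simp [hcdef, dotProduct, Fin.sum_univ_two, Complex.star_def]
  set d : ℂ := u 0 * v 1 - u 1 * v 0 with hddef
  have hdd : (starRingEnd ℂ) d * d = ((s:ℝ):ℂ)^2 := by
    have hsc : ((s:ℝ):ℂ)^2 = 1 - ((t:ℝ):ℂ)^2 := by exact_mod_cast hs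
    rw [hsc, ← hcc, hddef, hc]
    simp only [map_add, map_sub, _root_.map_mul, Complex.conj_conj]
    linear_combination ((starRingEnd ℂ) (u 0) * u 0 + (starRingEnd ℂ) (u 1) * u 1) * hv' + hu'
  -- the orthonormal basis
  set a : Fin 2 → ℂ := fun i => p * u i with hadef
  set w : Fin 2 → ℂ := ![-(starRingEnd ℂ) (u 1), (starRingEnd ℂ) (u 0)] with hwdef
  set e : ℂ := d / (s:ℝ) with hedef
  have hee : (starRingEnd ℂ) e * e = 1 := by
    rw [hedef, map_div₀, Complex.conj_ofReal, div_mul_div_comm, hdd, sq]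
    exact div_self (mul_ne_zero hsC hsC)
  set b : Fin 2 → ℂ := fun i => e * w i with hbdef
  have hw0 : w 0 = -(starRingEnd ℂ) (u 1) := rfl
  have hw1 : w 1 = (starRingEnd ℂ) (u 0) := rfl
  have naa : star a ⬝ᵥ a = 1 := by
    simp only [hadef, dotProduct, Fin.sum_univ_two, Pi.star_apply, Complex.star_def,
      _root_.map_mul]
    linear_combination ((starRingEnd ℂ) p * p) * hu' + hpp
  have nbb : star b ⬝ᵥ b = 1 := by
    simp only [hbdef, dotProduct, Fin.sum_univ_two, Pi.star_apply, Complex.star_def,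
      _root_.map_mul, hw0, hw1, map_neg, map_div₀, Complex.conj_conj, Complex.conj_ofReal]
    linear_combination ((starRingEnd ℂ) e * e) * hu' + hee
  have oab : star a ⬝ᵥ b = 0 := by
    simp only [hadef, hbdef, dotProduct, Fin.sum_univ_two, Pi.star_apply, Complex.star_def,
      _root_.map_mul, hw0, hw1]
    ring
  have oba : star b ⬝ᵥ a = 0 := by
    simp only [hadef, hbdef, dotProduct, Fin.sum_univ_two, Pi.star_apply, Complex.star_def,
      _root_.map_mul, hw0, hw1, map_neg, map_div₀, Complex.conj_conj, Complex.conj_ofReal]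
    ring
  have hcompl : ∀ i j, a i * (starRingEnd ℂ) (a j) + b i * (starRingEnd ℂ) (b j)
      = if i = j then 1 else 0 := by
    intro i j
    fin_cases i <;> fin_cases j <;>
      simp only [hadef, hbdef, hw0, hw1, _root_.map_mul, map_neg, map_div₀, mul_neg, neg_mul,
        Complex.conj_conj, Complex.conj_ofReal, Fin.isValue, Fin.zero_eta, Fin.mk_one,
        if_true, reduceIte, Matrix.cons_val_zero, Matrix.cons_val_one, Matrix.head_cons]
    · linear_combination (u 0 * (starRingEnd ℂ) (u 0)) * hpp
        + ((starRingEnd ℂ) (u 1) * u 1) * hee + hu'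
    · simp only [show ((0:Fin 2) = 1) ↔ False by decide, if_false]
      linear_combination (u 0 * (starRingEnd ℂ) (u 1)) * hpp
        - (u 0 * (starRingEnd ℂ) (u 1)) * hee
    · simp only [show ((1:Fin 2) = 0) ↔ False by decide, if_false]
      linear_combination (u 1 * (starRingEnd ℂ) (u 0)) * hpp
        - (u 1 * (starRingEnd ℂ) (u 0)) * hee
    · linear_combination (u 1 * (starRingEnd ℂ) (u 1)) * hpp
        + ((starRingEnd ℂ) (u 0) * u 0) * hee + hu'
  -- decomposition of v in the basis
  have hcu : ∀ i, v i = c * u i + d * w i := by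
    intro i
    fin_cases i <;> simp only [Fin.zero_eta, Fin.mk_one, Fin.isValue]
    · rw [hc, hddef, hw0]; linear_combination (-(v 0)) * hu'
    · rw [hc, hddef, hw1]; linear_combination (-(v 1)) * hu'
  have hse : ((s:ℝ):ℂ) * e = d := by
    rw [hedef, mul_comm, div_mul_cancel₀ _ hsC]
  have hva : ((t:ℝ):ℂ) • a + ((s:ℝ):ℂ) • b = v := by
    funext i
    simp only [Pi.add_apply, Pi.smul_apply, smul_eq_mul, hadef, hbdef]
    rw [hcu i]
    linear_combination (-(u i)) * hpc + (w i) * hse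
  obtain ⟨E0, E1, E2, E3, h0, h1, h2, h3, hsum, z0, z1, z2, z3⟩ :=
    core a b t s D r2 hcompl naa nbb oab oba hs hD hr hs0 hD0 hr0
  rw [hva] at z1 z2 z3
  have hborn : ∀ (E : Matrix (Fin 2 × Fin 2) (Fin 2 × Fin 2) ℂ) (k : ℂ)
      (ψ : Fin 2 × Fin 2 → ℂ), star ψ ⬝ᵥ (E *ᵥ ψ) = 0 →
      star (k • ψ) ⬝ᵥ (E *ᵥ (k • ψ)) = 0 := by
    intro E k ψ h
    rw [mulVec_smul, star_smul, smul_dotProduct, dotProduct_smul, h]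
    simp
  refine ⟨E0, E1, E2, E3, h0, h1, h2, h3, hsum, ?_, ?_, ?_, ?_⟩
  · rw [show prodState u u = ((starRingEnd ℂ) p * (starRingEnd ℂ) p) • prodState a a by
      funext q
      simp only [prodState, Pi.smul_apply, smul_eq_mul, hadef]
      linear_combination (-(u q.1 * u q.2) * ((starRingEnd ℂ) p * p + 1)) * hpp]
    exact hborn _ _ _ z0
  · rw [show prodState u v = (starRingEnd ℂ) p • prodState a v by
      funext q
      simp only [prodState, Pi.smul_apply, smul_eq_mul, hadef]
      linear_combination (-(u q.1 * v q.2)) * hpp]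
    exact hborn _ _ _ z1
  · rw [show prodState v u = (starRingEnd ℂ) p • prodState v a by
      funext q
      simp only [prodState, Pi.smul_apply, smul_eq_mul, hadef]
      linear_combination (-(v q.1 * u q.2)) * hpp]
    exact hborn _ _ _ z2
  · exact z3
end

section
/- Let (Ω, 𝒜) be a measurable space and let P be a probability measure on Bool × Bool × Ω, with coordinate maps A(a,b,ω) = a, B(a,b,ω) = b, Λ(a,b,ω) = ω. Assume: (i) the pushforward of P under (A, B) assigns probability 1/4 to each of the four pairs in Bool × Bool; (ii) there are measurable functions f_0, f_1, f_2, f_3 : Ω → ℝ with f_k ≥ 0 and f_0 + f_1 + f_2 + f_3 = 1 pointwise, such that ∫_{\{A = a_k, B = b_k\}} f_k(Λ) dP = 0 for each k, where (a_0,b_0) = (ff,ff), (a_1,b_1) = (ff,tt), (a_2,b_2) = (tt,ff), (a_3,b_3) = (tt,tt); (iii) A and B are conditionally independent given the σ-algebra generated by Λ. Then P-almost surely, the conditional probability of {A = tt} given the σ-algebra generated by Λ takes a value in {0, 1}, or the conditional probability of {B = tt} given the σ-algebra generated by Λ takes a value in {0, 1}. -/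
open MeasureTheory ProbabilityTheory

/-- The σ-algebra generated by the ontic-state coordinate `Λ(a,b,ω) = ω` on
`Bool × Bool × Ω`. -/
def sigmaLambda (Ω : Type*) [MeasurableSpace Ω] : MeasurableSpace (Bool × Bool × Ω) :=
  MeasurableSpace.comap (fun p => p.2.2) inferInstance

theorem sigmaLambda_le (Ω : Type*) [MeasurableSpace Ω] :
    sigmaLambda Ω ≤ (inferInstance : MeasurableSpace (Bool × Bool × Ω)) :=
  (measurable_snd.snd).comap_le

/-- The four preparation pairs `(a_k, b_k)` for the four readout outcomes. -/
def prepPair : Fin 4 → Bool × Bool :=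
  ![(false, false), (false, true), (true, false), (true, true)]

/-- PBR-without-CPA core step: preparations `A`, `B` chosen by independent fair coins
(hypothesis `hAB`), a four-outcome readout with response functions `f k` of the ontic
state only, antidistinguishability (`hanti`), and the Preparation Uninformativeness
Condition (`hPUC`: `A` and `B` conditionally independent given `σ(Λ)`) together imply
that almost every ontic state determines with certainty at least one of the two
preparation choices: a.s. the conditional probability of `{A = tt}` given `σ(Λ)` is
0 or 1, or that of `{B = tt}` given `σ(Λ)` is 0 or 1. -/
theorem stmt6 {Ω : Type*} [MeasurableSpace Ω] [StandardBorelSpace Ω] [Nonempty Ω]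
    (P : Measure (Bool × Bool × Ω)) [IsProbabilityMeasure P]
    (hAB : ∀ a b : Bool,
      Measure.map (fun p : Bool × Bool × Ω => (p.1, p.2.1)) P {(a, b)} = 1 / 4)
    (f : Fin 4 → Ω → ℝ)
    (hf_meas : ∀ k, Measurable (f k))
    (hf_nonneg : ∀ k ω, 0 ≤ f k ω)
    (hf_sum : ∀ ω, ∑ k, f k ω = 1)
    (hanti : ∀ k, (∫ p in {p : Bool × Bool × Ω |
        p.1 = (prepPair k).1 ∧ p.2.1 = (prepPair k).2}, f k p.2.2 ∂P) = 0)
    (hPUC : CondIndepFun (sigmaLambda Ω) (sigmaLambda_le Ω)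
      (fun p : Bool × Bool × Ω => p.1) (fun p : Bool × Bool × Ω => p.2.1) P) :
    ∀ᵐ p ∂P,
      (MeasureTheory.condExp (sigmaLambda Ω) P
          (Set.indicator {q : Bool × Bool × Ω | q.1 = true} (fun _ => (1 : ℝ))) p
        ∈ ({0, 1} : Set ℝ)) ∨
      (MeasureTheory.condExp (sigmaLambda Ω) P
          (Set.indicator {q : Bool × Bool × Ω | q.2.1 = true} (fun _ => (1 : ℝ))) p
        ∈ ({0, 1} : Set ℝ)) := by
  have hm := sigmaLambda_le Ω
  set A : Bool × Bool × Ω → Bool := fun p => p.1 with hA_def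
  set B : Bool × Bool × Ω → Bool := fun p => p.2.1 with hB_def
  set Λ : Bool × Bool × Ω → Ω := fun p => p.2.2 with hΛ_def
  have hA_meas : Measurable A := measurable_fst
  have hB_meas : Measurable B := measurable_fst.comp measurable_snd
  have hΛ_meas : Measurable Λ := measurable_snd.snd
  -- Λ is measurable with respect to m := comap Λ
  have hΛm : Measurable[ sigmaLambda Ω] Λ := fun s hs => ⟨s, hs, rfl⟩
  -- conditional probabilities
  set α : (Bool × Bool × Ω) → ℝ := P⟦A ⁻¹' {true} | sigmaLambda Ω⟧ with hα_def
  set β : (Bool × Bool × Ω) → ℝ := P⟦B ⁻¹' {true} | sigmaLambda Ω⟧ with hβ_def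
  -- condexp of complementary indicator
  have hcompl : ∀ (g : Bool × Bool × Ω → Bool), Measurable g →
      (P⟦g ⁻¹' {false} | sigmaLambda Ω⟧) =ᵐ[P] fun p => 1 - (P⟦g ⁻¹' {true} | sigmaLambda Ω⟧) p := by
    intro g hg
    have hset : (g ⁻¹' {false}).indicator (fun _ => (1:ℝ))
        = (fun _ => (1:ℝ)) - (g ⁻¹' {true}).indicator (fun _ => (1:ℝ)) := by
      funext p
      simp only [Set.indicator, Set.mem_preimage, Set.mem_singleton_iff, Pi.sub_apply]
      cases h : g p <;> simp
    rw [hset]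
    have h1 : Integrable (fun _ : Bool × Bool × Ω => (1:ℝ)) P := integrable_const 1
    have h2 : Integrable ((g ⁻¹' {true}).indicator (fun _ => (1:ℝ))) P := by
      apply Integrable.indicator h1
      exact hg (measurableSet_singleton true)
    refine (condExp_sub h1 h2 (sigmaLambda Ω)).trans ?_
    have hc : (P[(fun _ : Bool × Bool × Ω => (1:ℝ)) | sigmaLambda Ω]) = fun _ => (1:ℝ) :=
      condExp_const hm 1
    filter_upwards with p
    rw [Pi.sub_apply, hc]
  -- key antidistinguishability consequence
  have hkey : ∀ k : Fin 4, (fun p => f k (Λ p) * (P⟦A ⁻¹' {(prepPair k).1} | sigmaLambda Ω⟧) p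
      * (P⟦B ⁻¹' {(prepPair k).2} | sigmaLambda Ω⟧) p) =ᵐ[P] 0 := by
    intro k
    set S : Set (Bool × Bool × Ω) :=
      A ⁻¹' {(prepPair k).1} ∩ B ⁻¹' {(prepPair k).2} with hS_def
    have hS_meas : MeasurableSet S :=
      (hA_meas (measurableSet_singleton _)).inter (hB_meas (measurableSet_singleton _))
    have hf_le_one : ∀ ω, f k ω ≤ 1 := by
      intro ω
      calc f k ω ≤ ∑ j, f j ω := Finset.single_le_sum (fun j _ => hf_nonneg j ω) (Finset.mem_univ k)
        _ = 1 := hf_sum ω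
    have hfΛ_meas : Measurable (fun p => f k (Λ p)) := (hf_meas k).comp hΛ_meas
    have hfΛ_int : Integrable (fun p => f k (Λ p)) P := by
      refine (integrable_const (1:ℝ)).mono' hfΛ_meas.aestronglyMeasurable ?_
      filter_upwards with p
      rw [Real.norm_eq_abs, abs_of_nonneg (hf_nonneg k _)]
      exact hf_le_one _
    have hind_int : Integrable (S.indicator (fun _ => (1:ℝ))) P :=
      (integrable_const 1).indicator hS_meas
    have hmul_int : Integrable (fun p => f k (Λ p) * S.indicator (fun _ => (1:ℝ)) p) P := by
      refine hfΛ_int.mono' (hfΛ_meas.mul (measurable_one.indicator hS_meas)).aestronglyMeasurable ?_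
      filter_upwards with p
      by_cases hp : p ∈ S <;>
        simp [Set.indicator, hp, abs_of_nonneg (hf_nonneg k (Λ p)), hf_nonneg k (Λ p)]
    -- the set integral equals the integral of the product
    have hSeq : S = {p : Bool × Bool × Ω | p.1 = (prepPair k).1 ∧ p.2.1 = (prepPair k).2} := by
      ext p
      simp [hS_def, Set.mem_inter_iff, Set.mem_preimage, Set.mem_singleton_iff, hA_def, hB_def]
    have hint0 : ∫ p, f k (Λ p) * S.indicator (fun _ => (1:ℝ)) p ∂P = 0 := by
      have heq : ∫ p, f k (Λ p) * S.indicator (fun _ => (1:ℝ)) p ∂P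
          = ∫ p in S, f k (Λ p) ∂P := by
        rw [← integral_indicator hS_meas]
        congr 1
        funext p
        by_cases hp : p ∈ S <;> simp [Set.indicator, hp]
      rw [heq, hSeq]
      exact hanti k
    -- pull out the m-measurable factor
    have hfΛm : StronglyMeasurable[ sigmaLambda Ω] (fun p => f k (Λ p)) :=
      (Measurable.comp (hf_meas k) hΛm).stronglyMeasurable
    have hpull : P[(fun p => f k (Λ p) * S.indicator (fun _ => (1:ℝ)) p) |  sigmaLambda Ω]
        =ᵐ[P] fun p => f k (Λ p) * (P⟦S | sigmaLambda Ω⟧) p := by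
      exact condExp_mul_of_stronglyMeasurable_left hfΛm hmul_int hind_int
    haveI : SigmaFinite (P.trim hm) := inferInstance
    have hint_ce : ∫ p, (P[(fun p => f k (Λ p) * S.indicator (fun _ => (1:ℝ)) p) |  sigmaLambda Ω]) p ∂P = 0 := by
      rw [integral_condExp hm]; exact hint0
    have hint_prod : ∫ p, f k (Λ p) * (P⟦S | sigmaLambda Ω⟧) p ∂P = 0 := by
      rw [← integral_congr_ae hpull]; exact hint_ce
    have hint_prod_int : Integrable (fun p => f k (Λ p) * (P⟦S | sigmaLambda Ω⟧) p) P :=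
      (integrable_condExp).congr hpull
    have hnonneg : 0 ≤ᵐ[P] fun p => f k (Λ p) * (P⟦S | sigmaLambda Ω⟧) p := by
      have hce_nonneg : 0 ≤ᵐ[P] P⟦S | sigmaLambda Ω⟧ :=
        condExp_nonneg (Filter.Eventually.of_forall
          (fun p => Set.indicator_nonneg (fun _ _ => zero_le_one) p))
      filter_upwards [hce_nonneg] with p hp
      exact mul_nonneg (hf_nonneg k _) hp
    have hzero : (fun p => f k (Λ p) * (P⟦S | sigmaLambda Ω⟧) p) =ᵐ[P] 0 := by
      rw [← integral_eq_zero_iff_of_nonneg_ae hnonneg hint_prod_int] at *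
      exact hint_prod
    -- now factorize the conditional probability using conditional independence
    have hfact := (condIndepFun_iff_condExp_inter_preimage_eq_mul hA_meas hB_meas).mp hPUC
      {(prepPair k).1} {(prepPair k).2} (measurableSet_singleton _) (measurableSet_singleton _)
    filter_upwards [hzero, hfact] with p hp hfp
    simp only [Pi.zero_apply] at hp ⊢
    rw [mul_assoc, ← hfp]
    exact hp
  -- combine the four statements and the complements
  have hAc := hcompl A hA_meas
  have hBc := hcompl B hB_meas
  filter_upwards [hkey 0, hkey 1, hkey 2, hkey 3, hAc, hBc] with p h0 h1 h2 h3 hac hbc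
  simp only [Pi.zero_apply] at h0 h1 h2 h3
  by_contra hcon
  push_neg at hcon
  obtain ⟨hα, hβ⟩ := hcon
  simp only [Set.mem_insert_iff, Set.mem_singleton_iff, not_or] at hα hβ
  -- interpret conclusion condexps as α, β
  have heqA : (MeasureTheory.condExp (sigmaLambda Ω) P
      (Set.indicator {q : Bool × Bool × Ω | q.1 = true} (fun _ => (1 : ℝ)))) = α := rfl
  have heqB : (MeasureTheory.condExp (sigmaLambda Ω) P
      (Set.indicator {q : Bool × Bool × Ω | q.2.1 = true} (fun _ => (1 : ℝ)))) = β := rfl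
  rw [heqA] at hα
  rw [heqB] at hβ
  have hαff : (P⟦A ⁻¹' {false} | sigmaLambda Ω⟧) p = 1 - α p := hac
  have hβff : (P⟦B ⁻¹' {false} | sigmaLambda Ω⟧) p = 1 - β p := hbc
  have hα0 : α p ≠ 0 := hα.1
  have hα1 : 1 - α p ≠ 0 := sub_ne_zero.mpr (Ne.symm hα.2)
  have hβ0 : β p ≠ 0 := hβ.1
  have hβ1 : 1 - β p ≠ 0 := sub_ne_zero.mpr (Ne.symm hβ.2)
  have hprep : prepPair 0 = (false, false) ∧ prepPair 1 = (false, true)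
      ∧ prepPair 2 = (true, false) ∧ prepPair 3 = (true, true) := by
    refine ⟨rfl, rfl, rfl, rfl⟩
  rw [hprep.1] at h0; rw [hprep.2.1] at h1; rw [hprep.2.2.1] at h2; rw [hprep.2.2.2] at h3
  simp only at h0 h1 h2 h3
  rw [hαff, hβff] at h0
  rw [hαff] at h1
  rw [hβff] at h2
  have hf0 : f 0 (Λ p) = 0 := by
    rcases mul_eq_zero.mp h0 with h | h
    · rcases mul_eq_zero.mp h with h' | h'
      · exact h'
      · exact absurd h' hα1
    · exact absurd h hβ1
  have hf1 : f 1 (Λ p) = 0 := by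
    rcases mul_eq_zero.mp h1 with h | h
    · rcases mul_eq_zero.mp h with h' | h'
      · exact h'
      · exact absurd h' hα1
    · exact absurd h hβ0
  have hf2 : f 2 (Λ p) = 0 := by
    rcases mul_eq_zero.mp h2 with h | h
    · rcases mul_eq_zero.mp h with h' | h'
      · exact h'
      · exact absurd h' hα0
    · exact absurd h hβ1
  have hf3 : f 3 (Λ p) = 0 := by
    rcases mul_eq_zero.mp h3 with h | h
    · rcases mul_eq_zero.mp h with h' | h'
      · exact h'
      · exact absurd h' hα0
    · exact absurd h hβ0
  have := hf_sum (Λ p)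
  rw [Fin.sum_univ_four, hf0, hf1, hf2, hf3] at this
  norm_num at this
end

section
/- Let (Ω_1, 𝒜_1) and (Ω_2, 𝒜_2) be measurable spaces, let μ_ff, μ_tt be probability measures on Ω_1 and ν_ff, ν_tt probability measures on Ω_2, and let P be the probability measure on Bool × Bool × (Ω_1 × Ω_2) given by P = (1/4) ∑_{a,b ∈ Bool} δ_a × δ_b × (μ_a × ν_b), i.e., the preparation pair (a, b) is uniform on Bool × Bool and, conditional on (a, b), the ontic state is distributed as the product measure μ_a × ν_b. Then the first coordinate A and the second coordinate B are conditionally independent given the σ-algebra generated by the third coordinate Λ = (ω_1, ω_2). -/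
open MeasureTheory ProbabilityTheory
open scoped ENNReal

section Aux

variable {Ω₁ Ω₂ : Type*} [MeasurableSpace Ω₁] [MeasurableSpace Ω₂]

lemma aux_prod_withDensity (M : Measure Ω₁) (N : Measure Ω₂) [SFinite M] [SFinite N]
    {f : Ω₁ → ℝ≥0∞} {g : Ω₂ → ℝ≥0∞} (hf : Measurable f) (hg : Measurable g)
    (h1 : SigmaFinite (M.withDensity f)) (h2 : SigmaFinite (N.withDensity g)) :
    (M.prod N).withDensity (fun ω => f ω.1 * g ω.2)
      = (M.withDensity f).prod (N.withDensity g) := by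
  haveI := h1; haveI := h2
  refine (Measure.prod_eq fun s t hs ht => ?_).symm
  rw [withDensity_apply _ (hs.prod ht), ← Measure.prod_restrict,
    lintegral_prod_mul hf.aemeasurable hg.aemeasurable,
    withDensity_apply _ hs, withDensity_apply _ ht]

/-- KEY: a function of the ontic state with the right set-lintegrals is a version of the
conditional probability. -/
lemma condexp_eq_of_lambda_density
    (P : Measure (Bool × Bool × (Ω₁ × Ω₂))) [IsProbabilityMeasure P]
    {h : Ω₁ × Ω₂ → ℝ≥0∞} (hmeas : Measurable h)
    (hfin : ∀ᵐ p ∂P, h p.2.2 < ∞)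
    {S : Set (Bool × Bool × (Ω₁ × Ω₂))} (hS : MeasurableSet S)
    (heq : ∀ E : Set (Ω₁ × Ω₂), MeasurableSet E →
      P (S ∩ (fun p : Bool × Bool × (Ω₁ × Ω₂) => p.2.2) ⁻¹' E)
        = ∫⁻ p in (fun p : Bool × Bool × (Ω₁ × Ω₂) => p.2.2) ⁻¹' E, h p.2.2 ∂P) :
    (fun p : Bool × Bool × (Ω₁ × Ω₂) => (h p.2.2).toReal)
      =ᵐ[P] P⟦S | sigmaLambda (Ω₁ × Ω₂)⟧ := by
  have hm := sigmaLambda_le (Ω₁ × Ω₂)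
  haveI : SigmaFinite (P.trim hm) := by
    haveI : IsFiniteMeasure (P.trim hm) := isFiniteMeasure_trim hm
    infer_instance
  have hΛ : Measurable (fun p : Bool × Bool × (Ω₁ × Ω₂) => p.2.2) := measurable_snd.snd
  have hcomp : Measurable fun p : Bool × Bool × (Ω₁ × Ω₂) => h p.2.2 := hmeas.comp hΛ
  have hint : Integrable (fun p => (h p.2.2).toReal) P := by
    apply integrable_toReal_of_lintegral_ne_top hcomp.aemeasurable
    have h0 := heq Set.univ MeasurableSet.univ
    rw [Set.preimage_univ, Measure.restrict_univ] at h0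
    rw [← h0]
    exact (measure_lt_top _ _).ne
  refine ae_eq_condExp_of_forall_setIntegral_eq hm
    ((integrable_const (1:ℝ)).indicator hS) (fun s _ _ => hint.integrableOn) ?_ ?_
  · rintro s ⟨E, hE, rfl⟩ -
    rw [integral_toReal hcomp.aemeasurable.restrict (ae_restrict_of_ae hfin),
      setIntegral_indicator hS, setIntegral_const, smul_eq_mul, mul_one, Set.inter_comm, measureReal_def, heq E hE]
  · refine ⟨fun p => (h p.2.2).toReal, ?_, Filter.EventuallyEq.rfl⟩
    have hΛm : Measurable[sigmaLambda (Ω₁ × Ω₂)]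
        (fun p : Bool × Bool × (Ω₁ × Ω₂) => p.2.2) := fun s hs => ⟨s, hs, rfl⟩
    exact ((hmeas.comp hΛm).ennreal_toReal).stronglyMeasurable

end Aux

/-- PIP implies PUC: if the preparation pair `(a, b)` is uniform on `Bool × Bool` and,
conditional on `(a, b)`, the ontic state of the joint system is distributed as the
product measure `μ_a × ν_b`, then the two preparation variables are conditionally
independent given the σ-algebra generated by the ontic state. -/
theorem stmt7 {Ω₁ Ω₂ : Type*} [MeasurableSpace Ω₁] [MeasurableSpace Ω₂]
    [StandardBorelSpace Ω₁] [StandardBorelSpace Ω₂] [Nonempty Ω₁] [Nonempty Ω₂]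
    (μ : Bool → Measure Ω₁) (ν : Bool → Measure Ω₂)
    [∀ a, IsProbabilityMeasure (μ a)] [∀ b, IsProbabilityMeasure (ν b)]
    (P : Measure (Bool × Bool × (Ω₁ × Ω₂))) [IsProbabilityMeasure P]
    (hP : P = (1 / 4 : ℝ≥0∞) • ∑ a : Bool, ∑ b : Bool,
      (Measure.dirac a).prod ((Measure.dirac b).prod ((μ a).prod (ν b)))) :
    CondIndepFun (sigmaLambda (Ω₁ × Ω₂)) (sigmaLambda_le (Ω₁ × Ω₂))
      (fun p : Bool × Bool × (Ω₁ × Ω₂) => p.1)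
      (fun p : Bool × Bool × (Ω₁ × Ω₂) => p.2.1) P := by
  classical
  have hΛ : Measurable (fun p : Bool × Bool × (Ω₁ × Ω₂) => p.2.2) := measurable_snd.snd
  set M : Measure Ω₁ := μ false + μ true with hMdef
  set N : Measure Ω₂ := ν false + ν true with hNdef
  have hacμ : ∀ a, μ a ≪ M := by
    intro a; rw [hMdef]; cases a
    · exact Measure.absolutelyContinuous_of_le (Measure.le_add_right le_rfl)
    · exact Measure.absolutelyContinuous_of_le (Measure.le_add_left le_rfl)
  have hacν : ∀ b, ν b ≪ N := by
    intro b; rw [hNdef]; cases b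
    · exact Measure.absolutelyContinuous_of_le (Measure.le_add_right le_rfl)
    · exact Measure.absolutelyContinuous_of_le (Measure.le_add_left le_rfl)
  have hd : ∀ a, M.withDensity ((μ a).rnDeriv M) = μ a :=
    fun a => Measure.withDensity_rnDeriv_eq _ _ (hacμ a)
  have he : ∀ b, N.withDensity ((ν b).rnDeriv N) = ν b :=
    fun b => Measure.withDensity_rnDeriv_eq _ _ (hacν b)
  have hdm : ∀ a, Measurable ((μ a).rnDeriv M) := fun a => Measure.measurable_rnDeriv _ _
  have hem : ∀ b, Measurable ((ν b).rnDeriv N) := fun b => Measure.measurable_rnDeriv _ _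
  -- the law of the ontic state
  have hmap4 : ∀ a b : Bool,
      (((Measure.dirac a).prod ((Measure.dirac b).prod ((μ a).prod (ν b)))).map
        (fun p : Bool × Bool × (Ω₁ × Ω₂) => p.2.2)) = (μ a).prod (ν b) := by
    intro a b
    have h1 : (fun p : Bool × Bool × (Ω₁ × Ω₂) => p.2.2)
        = (Prod.snd ∘ Prod.snd : Bool × Bool × (Ω₁ × Ω₂) → Ω₁ × Ω₂) := rfl
    rw [h1, ← Measure.map_map measurable_snd measurable_snd, Measure.map_snd_prod,
      measure_univ, one_smul, Measure.map_snd_prod, measure_univ, one_smul]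
  have Pmap : P.map (fun p : Bool × Bool × (Ω₁ × Ω₂) => p.2.2)
      = (4⁻¹ : ℝ≥0∞) • (M.prod N) := by
    rw [hP, Measure.map_smul, one_div]
    congr 1
    simp only [Fintype.sum_bool]
    rw [Measure.map_add _ _ hΛ, Measure.map_add _ _ hΛ, Measure.map_add _ _ hΛ,
      hmap4, hmap4, hmap4, hmap4, hMdef, hNdef, Measure.add_prod, Measure.prod_add,
      Measure.prod_add]
    abel
  have LMAP : ∀ (h : Ω₁ × Ω₂ → ℝ≥0∞), Measurable h → ∀ E : Set (Ω₁ × Ω₂), MeasurableSet E →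
      ∫⁻ p in (fun p : Bool × Bool × (Ω₁ × Ω₂) => p.2.2) ⁻¹' E, h p.2.2 ∂P
        = 4⁻¹ * ∫⁻ ω in E, h ω ∂(M.prod N) := by
    intro h hh E hE
    rw [← setLIntegral_map hE hh hΛ, Pmap, Measure.restrict_smul, lintegral_smul_measure, smul_eq_mul]
  -- core density computations
  have CT : ∀ (a b : Bool) (E : Set (Ω₁ × Ω₂)), MeasurableSet E →
      ∫⁻ ω in E, (μ a).rnDeriv M ω.1 * (ν b).rnDeriv N ω.2 ∂(M.prod N)
        = ((μ a).prod (ν b)) E := by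
    intro a b E hE
    have h1 : SigmaFinite (M.withDensity ((μ a).rnDeriv M)) := by rw [hd a]; infer_instance
    have h2 : SigmaFinite (N.withDensity ((ν b).rnDeriv N)) := by rw [he b]; infer_instance
    rw [← withDensity_apply _ hE, aux_prod_withDensity M N (hdm a) (hem b) h1 h2, hd a, he b]
  have CTA : ∀ (a : Bool) (E : Set (Ω₁ × Ω₂)), MeasurableSet E →
      ∫⁻ ω in E, (μ a).rnDeriv M ω.1 ∂(M.prod N) = ((μ a).prod N) E := by
    intro a E hE
    have h1 : SigmaFinite (M.withDensity ((μ a).rnDeriv M)) := by rw [hd a]; infer_instance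
    have h2 : SigmaFinite (N.withDensity (fun _ : Ω₂ => (1 : ℝ≥0∞))) := by
      rw [show (fun _ : Ω₂ => (1 : ℝ≥0∞)) = 1 from rfl, withDensity_one]; infer_instance
    calc ∫⁻ ω in E, (μ a).rnDeriv M ω.1 ∂(M.prod N)
        = ∫⁻ ω in E, (μ a).rnDeriv M ω.1 * (fun _ : Ω₂ => (1 : ℝ≥0∞)) ω.2 ∂(M.prod N) :=
          lintegral_congr fun ω => (mul_one _).symm
      _ = ((μ a).prod N) E := by
          rw [← withDensity_apply _ hE,
            aux_prod_withDensity M N (hdm a) measurable_const h1 h2, hd a,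
            show (fun _ : Ω₂ => (1 : ℝ≥0∞)) = 1 from rfl, withDensity_one]
  have CTB : ∀ (b : Bool) (E : Set (Ω₁ × Ω₂)), MeasurableSet E →
      ∫⁻ ω in E, (ν b).rnDeriv N ω.2 ∂(M.prod N) = (M.prod (ν b)) E := by
    intro b E hE
    have h1 : SigmaFinite (M.withDensity (fun _ : Ω₁ => (1 : ℝ≥0∞))) := by
      rw [show (fun _ : Ω₁ => (1 : ℝ≥0∞)) = 1 from rfl, withDensity_one]; infer_instance
    have h2 : SigmaFinite (N.withDensity ((ν b).rnDeriv N)) := by rw [he b]; infer_instance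
    calc ∫⁻ ω in E, (ν b).rnDeriv N ω.2 ∂(M.prod N)
        = ∫⁻ ω in E, (fun _ : Ω₁ => (1 : ℝ≥0∞)) ω.1 * (ν b).rnDeriv N ω.2 ∂(M.prod N) :=
          lintegral_congr fun ω => (one_mul _).symm
      _ = (M.prod (ν b)) E := by
          rw [← withDensity_apply _ hE,
            aux_prod_withDensity M N measurable_const (hem b) h1 h2, he b,
            show (fun _ : Ω₁ => (1 : ℝ≥0∞)) = 1 from rfl, withDensity_one]
  -- the candidate densities
  set F : Set Bool → Ω₁ → ℝ≥0∞ :=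
    fun s x => ∑ a : Bool, s.indicator (fun _ => (1 : ℝ≥0∞)) a * (μ a).rnDeriv M x with hF
  set G : Set Bool → Ω₂ → ℝ≥0∞ :=
    fun t y => ∑ b : Bool, t.indicator (fun _ => (1 : ℝ≥0∞)) b * (ν b).rnDeriv N y with hG
  have hFm : ∀ s, Measurable (F s) := fun s =>
    Finset.measurable_sum _ fun a _ => (hdm a).const_mul _
  have hGm : ∀ t, Measurable (G t) := fun t =>
    Finset.measurable_sum _ fun b _ => (hem b).const_mul _
  have hde : ∀ a b : Bool, Measurable (fun ω : Ω₁ × Ω₂ =>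
      (μ a).rnDeriv M ω.1 * (ν b).rnDeriv N ω.2) :=
    fun a b => ((hdm a).comp measurable_fst).mul ((hem b).comp measurable_snd)
  have hd1 : ∀ a : Bool, Measurable (fun ω : Ω₁ × Ω₂ => (μ a).rnDeriv M ω.1) :=
    fun a => (hdm a).comp measurable_fst
  have he2 : ∀ b : Bool, Measurable (fun ω : Ω₁ × Ω₂ => (ν b).rnDeriv N ω.2) :=
    fun b => (hem b).comp measurable_snd
  have MAINJ : ∀ (s t : Set Bool) (E : Set (Ω₁ × Ω₂)), MeasurableSet E →
      ∫⁻ ω in E, F s ω.1 * G t ω.2 ∂(M.prod N)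
        = ∑ a : Bool, ∑ b : Bool, s.indicator (fun _ => (1 : ℝ≥0∞)) a *
            t.indicator (fun _ => (1 : ℝ≥0∞)) b * ((μ a).prod (ν b)) E := by
    intro s t E hE
    have hterm : ∀ ω : Ω₁ × Ω₂, F s ω.1 * G t ω.2 = ∑ a : Bool, ∑ b : Bool,
        s.indicator (fun _ => (1 : ℝ≥0∞)) a * t.indicator (fun _ => (1 : ℝ≥0∞)) b *
          ((μ a).rnDeriv M ω.1 * (ν b).rnDeriv N ω.2) := by
      intro ω
      rw [hF, hG, Finset.sum_mul_sum]
      exact Finset.sum_congr rfl fun a _ => Finset.sum_congr rfl fun b _ =>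
        mul_mul_mul_comm _ _ _ _
    rw [lintegral_congr hterm,
      lintegral_finset_sum _ (fun a _ => Finset.measurable_sum _ fun b _ =>
        ((hde a b).const_mul _))]
    refine Finset.sum_congr rfl fun a _ => ?_
    rw [lintegral_finset_sum _ (fun b _ => ((hde a b).const_mul _))]
    refine Finset.sum_congr rfl fun b _ => ?_
    rw [lintegral_const_mul _ (hde a b), CT a b E hE]
  have MAINA : ∀ (s : Set Bool) (E : Set (Ω₁ × Ω₂)), MeasurableSet E →
      ∫⁻ ω in E, F s ω.1 ∂(M.prod N)
        = ∑ a : Bool, s.indicator (fun _ => (1 : ℝ≥0∞)) a * ((μ a).prod N) E := by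
    intro s E hE
    have hterm : ∀ ω : Ω₁ × Ω₂, F s ω.1 = ∑ a : Bool,
        s.indicator (fun _ => (1 : ℝ≥0∞)) a * (μ a).rnDeriv M ω.1 := fun ω => by rw [hF]
    rw [lintegral_congr hterm,
      lintegral_finset_sum _ (fun a _ => (hd1 a).const_mul _)]
    refine Finset.sum_congr rfl fun a _ => ?_
    rw [lintegral_const_mul _ (hd1 a), CTA a E hE]
  have MAINB : ∀ (t : Set Bool) (E : Set (Ω₁ × Ω₂)), MeasurableSet E →
      ∫⁻ ω in E, G t ω.2 ∂(M.prod N)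
        = ∑ b : Bool, t.indicator (fun _ => (1 : ℝ≥0∞)) b * (M.prod (ν b)) E := by
    intro t E hE
    have hterm : ∀ ω : Ω₁ × Ω₂, G t ω.2 = ∑ b : Bool,
        t.indicator (fun _ => (1 : ℝ≥0∞)) b * (ν b).rnDeriv N ω.2 := fun ω => by rw [hG]
    rw [lintegral_congr hterm,
      lintegral_finset_sum _ (fun b _ => (he2 b).const_mul _)]
    refine Finset.sum_congr rfl fun b _ => ?_
    rw [lintegral_const_mul _ (he2 b), CTB b E hE]
  -- preparation-set probabilities
  have PSET : ∀ (s t : Set Bool) (E : Set (Ω₁ × Ω₂)), MeasurableSet E →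
      P ((fun p : Bool × Bool × (Ω₁ × Ω₂) => p.1) ⁻¹' s ∩
          (fun p : Bool × Bool × (Ω₁ × Ω₂) => p.2.1) ⁻¹' t ∩
          (fun p : Bool × Bool × (Ω₁ × Ω₂) => p.2.2) ⁻¹' E)
        = 4⁻¹ * ∑ a : Bool, ∑ b : Bool, s.indicator (fun _ => (1 : ℝ≥0∞)) a *
            t.indicator (fun _ => (1 : ℝ≥0∞)) b * ((μ a).prod (ν b)) E := by
    intro s t E hE
    have hBIG : MeasurableSet ((fun p : Bool × Bool × (Ω₁ × Ω₂) => p.1) ⁻¹' s ∩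
        (fun p : Bool × Bool × (Ω₁ × Ω₂) => p.2.1) ⁻¹' t ∩
        (fun p : Bool × Bool × (Ω₁ × Ω₂) => p.2.2) ⁻¹' E) :=
      ((measurable_fst .of_discrete).inter
        ((measurable_fst.comp measurable_snd) .of_discrete)).inter (hΛ hE)
    rw [hP, Measure.smul_apply, Measure.finset_sum_apply]
    simp only [Measure.finset_sum_apply]
    rw [one_div, smul_eq_mul]
    congr 1
    refine Finset.sum_congr rfl fun a _ => Finset.sum_congr rfl fun b _ => ?_
    rw [Measure.dirac_prod, Measure.dirac_prod,
      Measure.map_apply measurable_prodMk_left hBIG,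
      Measure.map_apply measurable_prodMk_left (measurable_prodMk_left hBIG)]
    by_cases ha : a ∈ s <;> by_cases hb : b ∈ t
    · have hset : (Prod.mk b ⁻¹' (Prod.mk a ⁻¹'
          ((fun p : Bool × Bool × (Ω₁ × Ω₂) => p.1) ⁻¹' s ∩
           (fun p : Bool × Bool × (Ω₁ × Ω₂) => p.2.1) ⁻¹' t ∩
           (fun p : Bool × Bool × (Ω₁ × Ω₂) => p.2.2) ⁻¹' E))) = E := by
        ext ω; simp [ha, hb]
      rw [hset, Set.indicator_of_mem ha, Set.indicator_of_mem hb, one_mul, one_mul]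
    · have hset : (Prod.mk b ⁻¹' (Prod.mk a ⁻¹'
          ((fun p : Bool × Bool × (Ω₁ × Ω₂) => p.1) ⁻¹' s ∩
           (fun p : Bool × Bool × (Ω₁ × Ω₂) => p.2.1) ⁻¹' t ∩
           (fun p : Bool × Bool × (Ω₁ × Ω₂) => p.2.2) ⁻¹' E))) = ∅ := by
        ext ω; simp [ha, hb]
      rw [hset, Set.indicator_of_notMem hb]
      simp
    · have hset : (Prod.mk b ⁻¹' (Prod.mk a ⁻¹'
          ((fun p : Bool × Bool × (Ω₁ × Ω₂) => p.1) ⁻¹' s ∩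
           (fun p : Bool × Bool × (Ω₁ × Ω₂) => p.2.1) ⁻¹' t ∩
           (fun p : Bool × Bool × (Ω₁ × Ω₂) => p.2.2) ⁻¹' E))) = ∅ := by
        ext ω; simp [ha, hb]
      rw [hset, Set.indicator_of_notMem ha]
      simp
    · have hset : (Prod.mk b ⁻¹' (Prod.mk a ⁻¹'
          ((fun p : Bool × Bool × (Ω₁ × Ω₂) => p.1) ⁻¹' s ∩
           (fun p : Bool × Bool × (Ω₁ × Ω₂) => p.2.1) ⁻¹' t ∩
           (fun p : Bool × Bool × (Ω₁ × Ω₂) => p.2.2) ⁻¹' E))) = ∅ := by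
        ext ω; simp [ha, hb]
      rw [hset, Set.indicator_of_notMem ha]
      simp
  -- a.e. finiteness of the densities
  have aeM : ∀ᵐ x ∂M, (μ false).rnDeriv M x < ∞ ∧ (μ true).rnDeriv M x < ∞ :=
    (Measure.rnDeriv_lt_top (μ false) M).and (Measure.rnDeriv_lt_top (μ true) M)
  have aeN : ∀ᵐ y ∂N, (ν false).rnDeriv N y < ∞ ∧ (ν true).rnDeriv N y < ∞ :=
    (Measure.rnDeriv_lt_top (ν false) N).and (Measure.rnDeriv_lt_top (ν true) N)
  have aeProd1 : ∀ᵐ ω ∂(M.prod N),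
      (μ false).rnDeriv M ω.1 < ∞ ∧ (μ true).rnDeriv M ω.1 < ∞ :=
    by
      refine ae_of_ae_map (p := fun x : Ω₁ => (μ false).rnDeriv M x < ∞ ∧
        (μ true).rnDeriv M x < ∞) measurable_fst.aemeasurable ?_
      rw [Measure.map_fst_prod]; exact Measure.ae_smul_measure aeM _
  have aeProd2 : ∀ᵐ ω ∂(M.prod N),
      (ν false).rnDeriv N ω.2 < ∞ ∧ (ν true).rnDeriv N ω.2 < ∞ :=
    by
      refine ae_of_ae_map (p := fun y : Ω₂ => (ν false).rnDeriv N y < ∞ ∧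
        (ν true).rnDeriv N y < ∞) measurable_snd.aemeasurable ?_
      rw [Measure.map_snd_prod]; exact Measure.ae_smul_measure aeN _
  have AEFIN : ∀ᵐ p ∂P,
      ((μ false).rnDeriv M p.2.2.1 < ∞ ∧ (μ true).rnDeriv M p.2.2.1 < ∞) ∧
      ((ν false).rnDeriv N p.2.2.2 < ∞ ∧ (ν true).rnDeriv N p.2.2.2 < ∞) :=
    by
      refine ae_of_ae_map (p := fun ω : Ω₁ × Ω₂ =>
        ((μ false).rnDeriv M ω.1 < ∞ ∧ (μ true).rnDeriv M ω.1 < ∞) ∧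
        ((ν false).rnDeriv N ω.2 < ∞ ∧ (ν true).rnDeriv N ω.2 < ∞)) hΛ.aemeasurable ?_
      rw [Pmap]; exact Measure.ae_smul_measure (aeProd1.and aeProd2) _
  have hFlt : ∀ (s : Set Bool) (x : Ω₁),
      ((μ false).rnDeriv M x < ∞ ∧ (μ true).rnDeriv M x < ∞) → F s x < ∞ := by
    intro s x hx
    rw [hF]
    refine ENNReal.sum_lt_top.2 fun a _ => ?_
    rw [Set.indicator_apply]
    split_ifs
    · rw [one_mul]; cases a
      · exact hx.1
      · exact hx.2
    · simp
  have hGlt : ∀ (t : Set Bool) (y : Ω₂),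
      ((ν false).rnDeriv N y < ∞ ∧ (ν true).rnDeriv N y < ∞) → G t y < ∞ := by
    intro t y hy
    rw [hG]
    refine ENNReal.sum_lt_top.2 fun b _ => ?_
    rw [Set.indicator_apply]
    split_ifs
    · rw [one_mul]; cases b
      · exact hy.1
      · exact hy.2
    · simp
  -- assemble
  refine (condIndepFun_iff_condExp_inter_preimage_eq_mul
    (f := fun p : Bool × Bool × (Ω₁ × Ω₂) => p.1)
    (g := fun p : Bool × Bool × (Ω₁ × Ω₂) => p.2.1)
    measurable_fst (measurable_fst.comp measurable_snd)).mpr ?_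
  intro s t hs ht
  have hSA : MeasurableSet ((fun p : Bool × Bool × (Ω₁ × Ω₂) => p.1) ⁻¹' s) :=
    measurable_fst hs
  have hSB : MeasurableSet ((fun p : Bool × Bool × (Ω₁ × Ω₂) => p.2.1) ⁻¹' t) :=
    (measurable_fst.comp measurable_snd) ht
  have hFGm : Measurable (fun ω : Ω₁ × Ω₂ => F s ω.1 * G t ω.2) :=
    ((hFm s).comp measurable_fst).mul ((hGm t).comp measurable_snd)
  have hFcm : Measurable (fun ω : Ω₁ × Ω₂ => F s ω.1) := (hFm s).comp measurable_fst
  have hGcm : Measurable (fun ω : Ω₁ × Ω₂ => G t ω.2) := (hGm t).comp measurable_snd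
  have EJ := condexp_eq_of_lambda_density P hFGm
    (AEFIN.mono fun p hp => ENNReal.mul_lt_top (hFlt s _ hp.1) (hGlt t _ hp.2))
    (hSA.inter hSB)
    (by
      intro E hE
      rw [LMAP _ hFGm E hE, MAINJ s t E hE, PSET s t E hE])
  have EA := condexp_eq_of_lambda_density P hFcm
    (AEFIN.mono fun p hp => hFlt s _ hp.1) hSA
    (by
      intro E hE
      have h0 := PSET s Set.univ E hE
      rw [Set.preimage_univ, Set.inter_univ] at h0
      rw [h0, LMAP _ hFcm E hE, MAINA s E hE]
      congr 1
      refine Finset.sum_congr rfl fun a _ => ?_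
      rw [Fintype.sum_bool]
      simp only [Set.indicator_univ]
      rw [hNdef, Measure.prod_add, Measure.add_apply]
      ring)
  have EB := condexp_eq_of_lambda_density P hGcm
    (AEFIN.mono fun p hp => hGlt t _ hp.2) hSB
    (by
      intro E hE
      have h0 := PSET Set.univ t E hE
      rw [Set.preimage_univ, Set.univ_inter] at h0
      rw [h0, LMAP _ hGcm E hE, MAINB t E hE]
      congr 1
      rw [Finset.sum_comm]
      refine Finset.sum_congr rfl fun b _ => ?_
      rw [Fintype.sum_bool]
      simp only [Set.indicator_univ]
      rw [hMdef, Measure.add_prod, Measure.add_apply]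
      ring)
  filter_upwards [EJ, EA, EB] with p h3 h1 h2
  rw [← h3, ← h1, ← h2]
  exact ENNReal.toReal_mul
end

section
/- Let (Ω, 𝒜) be a measurable space and let P be a probability measure on Bool × Bool × Ω with coordinate maps A, B, Λ, such that the pushforward of P under (A, B) assigns probability 1/4 to each pair in Bool × Bool. Suppose the conditional distributions of Λ given A = ff and given A = tt (i.e., the pushforwards under Λ of P conditioned on {A = ff} and on {A = tt}) are mutually singular, and likewise the conditional distributions of Λ given B = ff and given B = tt are mutually singular. Then A and B are conditionally independent given the σ-algebra generated by Λ. -/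
open MeasureTheory ProbabilityTheory

/-- If the conditional distributions of the ontic state given the two values of a
Boolean random variable `f` are mutually singular, then `f` is a.e. determined by the
ontic state: there is a measurable set `S` with `f p = true ↔ p.2.2 ∈ S` a.e. -/
lemma keyLem {Ω : Type*} [MeasurableSpace Ω] (P : Measure (Bool × Bool × Ω))
    [IsProbabilityMeasure P] (f : Bool × Bool × Ω → Bool) (hfm : Measurable f)
    (hs : (Measure.map (fun p : Bool × Bool × Ω => p.2.2)
            (ProbabilityTheory.cond P {p | f p = false})).MutuallySingular
          (Measure.map (fun p : Bool × Bool × Ω => p.2.2)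
            (ProbabilityTheory.cond P {p | f p = true}))) :
    ∃ S : Set Ω, MeasurableSet S ∧ ∀ᵐ p ∂P, (f p = true ↔ p.2.2 ∈ S) := by
  obtain ⟨S, hSm, hS0, hS1⟩ := hs
  refine ⟨S, hSm, ?_⟩
  have hΛ : Measurable (fun p : Bool × Bool × Ω => p.2.2) := measurable_snd.snd
  have hmf : MeasurableSet {p : Bool × Bool × Ω | f p = false} :=
    hfm (measurableSet_singleton false)
  have hmt : MeasurableSet {p : Bool × Bool × Ω | f p = true} :=
    hfm (measurableSet_singleton true)
  have e0 : P ({p : Bool × Bool × Ω | f p = false} ∩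
      (fun p : Bool × Bool × Ω => p.2.2) ⁻¹' S) = 0 := by
    have := hS0
    rw [Measure.map_apply hΛ hSm, ProbabilityTheory.cond_apply hmf] at this
    have hne : (P {p : Bool × Bool × Ω | f p = false})⁻¹ ≠ 0 :=
      ENNReal.inv_ne_zero.mpr (measure_ne_top _ _)
    exact (mul_eq_zero.mp this).resolve_left hne
  have e1 : P ({p : Bool × Bool × Ω | f p = true} ∩
      (fun p : Bool × Bool × Ω => p.2.2) ⁻¹' Sᶜ) = 0 := by
    have := hS1
    rw [Measure.map_apply hΛ hSm.compl, ProbabilityTheory.cond_apply hmt] at this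
    have hne : (P {p : Bool × Bool × Ω | f p = true})⁻¹ ≠ 0 :=
      ENNReal.inv_ne_zero.mpr (measure_ne_top _ _)
    exact (mul_eq_zero.mp this).resolve_left hne
  rw [MeasureTheory.ae_iff]
  refine measure_mono_null (fun p hp => ?_) (measure_union_null e0 e1)
  simp only [Set.mem_setOf_eq] at hp
  by_cases hfp : f p = true
  · right
    exact ⟨hfp, fun hmem => hp (iff_of_true hfp hmem)⟩
  · left
    have hfp' : f p = false := by cases h : f p <;> simp_all
    refine ⟨hfp', ?_⟩
    by_contra hmem
    exact hp (iff_of_false (by simp [hfp']) hmem)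

/-- The conditional expectation given `sigmaLambda Ω` of the indicator of a set that is
a.e. equal to a `sigmaLambda`-measurable set `w` is the indicator of `w`. -/
lemma condexp_set_eq {Ω : Type*} [MeasurableSpace Ω] (P : Measure (Bool × Bool × Ω))
    [IsProbabilityMeasure P] (u w : Set (Bool × Bool × Ω))
    (hw : MeasurableSet[sigmaLambda Ω] w) (huw : ∀ᵐ p ∂P, (p ∈ u ↔ p ∈ w)) :
    (P⟦u | sigmaLambda Ω⟧) =ᵐ[P] w.indicator (fun _ => (1 : ℝ)) := by
  have h1 : (P⟦u | sigmaLambda Ω⟧) =ᵐ[P] (P⟦w | sigmaLambda Ω⟧) :=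
    condExp_congr_ae (indicator_ae_eq_of_ae_eq_set (Filter.eventuallyEq_set.mpr huw))
  refine h1.trans ?_
  rw [condExp_of_stronglyMeasurable (sigmaLambda_le Ω)
    (stronglyMeasurable_const.indicator hw)
    ((integrable_const (1 : ℝ)).indicator (sigmaLambda_le Ω _ hw))]

/-- Ontic distinctness implies PUC: preparations `A`, `B` chosen by independent fair
coins; if the conditional distributions of the ontic state `Λ` given `A = ff` and
`A = tt` are mutually singular, and likewise for `B`, then `A` and `B` are
conditionally independent given the σ-algebra generated by `Λ`. -/
theorem stmt8 {Ω : Type*} [MeasurableSpace Ω] [StandardBorelSpace Ω] [Nonempty Ω]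
    (P : Measure (Bool × Bool × Ω)) [IsProbabilityMeasure P]
    (hAB : ∀ a b : Bool,
      Measure.map (fun p : Bool × Bool × Ω => (p.1, p.2.1)) P {(a, b)} = 1 / 4)
    (hA : (Measure.map (fun p : Bool × Bool × Ω => p.2.2)
            (ProbabilityTheory.cond P {p : Bool × Bool × Ω | p.1 = false})).MutuallySingular
          (Measure.map (fun p : Bool × Bool × Ω => p.2.2)
            (ProbabilityTheory.cond P {p : Bool × Bool × Ω | p.1 = true})))
    (hB : (Measure.map (fun p : Bool × Bool × Ω => p.2.2)
            (ProbabilityTheory.cond P {p : Bool × Bool × Ω | p.2.1 = false})).MutuallySingular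
          (Measure.map (fun p : Bool × Bool × Ω => p.2.2)
            (ProbabilityTheory.cond P {p : Bool × Bool × Ω | p.2.1 = true}))) :
    CondIndepFun (sigmaLambda Ω) (sigmaLambda_le Ω)
      (fun p : Bool × Bool × Ω => p.1) (fun p : Bool × Bool × Ω => p.2.1) P := by
  classical
  obtain ⟨S, hSm, hfS⟩ := keyLem P (fun p => p.1) measurable_fst hA
  obtain ⟨T, hTm, hgT⟩ := keyLem P (fun p => p.2.1) (measurable_fst.comp measurable_snd) hB
  rw [condIndepFun_iff_condExp_inter_preimage_eq_mul
    (show Measurable (fun p : Bool × Bool × Ω => p.1) from measurable_fst)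
    (show Measurable (fun p : Bool × Bool × Ω => p.2.1) from measurable_fst.comp measurable_snd)]
  intro s t hs ht
  set σ : Ω → Bool := fun ω => if ω ∈ S then true else false with hσdef
  set τ : Ω → Bool := fun ω => if ω ∈ T then true else false with hτdef
  have hσ : Measurable σ := Measurable.ite hSm measurable_const measurable_const
  have hτ : Measurable τ := Measurable.ite hTm measurable_const measurable_const
  set u : Set (Bool × Bool × Ω) := (fun p : Bool × Bool × Ω => σ p.2.2) ⁻¹' s with hudef
  set v : Set (Bool × Bool × Ω) := (fun p : Bool × Bool × Ω => τ p.2.2) ⁻¹' t with hvdef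
  have hum : MeasurableSet[sigmaLambda Ω] u := ⟨σ ⁻¹' s, hσ hs, rfl⟩
  have hvm : MeasurableSet[sigmaLambda Ω] v := ⟨τ ⁻¹' t, hτ ht, rfl⟩
  have hfσ : ∀ᵐ p ∂P, (fun p : Bool × Bool × Ω => p.1) p = σ p.2.2 := by
    filter_upwards [hfS] with p hp
    by_cases h : p.2.2 ∈ S
    · simp only [hσdef, if_pos h]; exact hp.mpr h
    · simp only [hσdef, if_neg h]
      cases hb : p.1
      · rfl
      · exact absurd (hp.mp hb) h
  have hgτ : ∀ᵐ p ∂P, (fun p : Bool × Bool × Ω => p.2.1) p = τ p.2.2 := by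
    filter_upwards [hgT] with p hp
    by_cases h : p.2.2 ∈ T
    · simp only [hτdef, if_pos h]; exact hp.mpr h
    · simp only [hτdef, if_neg h]
      cases hb : p.2.1
      · rfl
      · exact absurd (hp.mp hb) h
  have hfu : ∀ᵐ p ∂P, (p ∈ (fun p : Bool × Bool × Ω => p.1) ⁻¹' s ↔ p ∈ u) := by
    filter_upwards [hfσ] with p hp
    simp only [Set.mem_preimage, hudef, hp]
  have hgv : ∀ᵐ p ∂P, (p ∈ (fun p : Bool × Bool × Ω => p.2.1) ⁻¹' t ↔ p ∈ v) := by
    filter_upwards [hgτ] with p hp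
    simp only [Set.mem_preimage, hvdef, hp]
  have hinter : ∀ᵐ p ∂P,
      (p ∈ (fun p : Bool × Bool × Ω => p.1) ⁻¹' s ∩ (fun p : Bool × Bool × Ω => p.2.1) ⁻¹' t
        ↔ p ∈ u ∩ v) := by
    filter_upwards [hfu, hgv] with p h1 h2
    simp only [Set.mem_inter_iff, h1, h2]
  have h1 := condexp_set_eq P _ (u ∩ v) (hum.inter hvm) hinter
  have h2 := condexp_set_eq P _ u hum hfu
  have h3 := condexp_set_eq P _ v hvm hgv
  refine h1.trans (Filter.EventuallyEq.trans (Filter.EventuallyEq.of_eq ?_)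
    (h2.mul h3).symm)
  funext ω
  by_cases hu : ω ∈ u <;> by_cases hv : ω ∈ v <;>
    simp [Set.indicator_apply, Set.mem_inter_iff, hu, hv]
end
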